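/- arXiv:2212.02956 — 4 statements merged into one kernel-verified Lean document; each statement's English description precedes it below -/
import Mathlib

section
/- Every closed B-isotropic subspace L of a super Hilbert space V is the restricted graph graph′(u) = graph(u) ∩ ker(u)^⊥ of a unique partial isometry u : V⁺ → V⁻; conversely, the restricted graph of any partial isometry u : V⁺ → V⁻ is a closed B-isotropic subspace. -/
set_option maxHeartbeats 1000000


noncomputable section

open Submodule ContinuousLinearMap

/-- Build an element of the `L²`-product from its two components. -/
abbrev p2 {α β : Type*} [AddCommGroup α] [Module ℝ α] [AddCommGroup β] [Module ℝ β]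
    (a : α) (b : β) : WithLp 2 (α × β) :=
  (WithLp.linearEquiv 2 ℝ (α × β)).symm (a, b)

/-- The `L²`-product as a linear equiv with the plain product. -/
abbrev unL2 {α β : Type*} [AddCommGroup α] [Module ℝ α] [AddCommGroup β] [Module ℝ β] :
    WithLp 2 (α × β) →ₗ[ℝ] α × β :=
  (WithLp.linearEquiv 2 ℝ (α × β)).toLinearMap

abbrev mkL2 {α β : Type*} [AddCommGroup α] [Module ℝ α] [AddCommGroup β] [Module ℝ β] :
    (α × β) →ₗ[ℝ] WithLp 2 (α × β) :=
  ((WithLp.linearEquiv 2 ℝ (α × β)).symm : (α × β) ≃ₗ[ℝ] WithLp 2 (α × β)).toLinearMap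

section Defs

variable {Vp Vm : Type*} [NormedAddCommGroup Vp] [InnerProductSpace ℝ Vp]
  [NormedAddCommGroup Vm] [InnerProductSpace ℝ Vm]

/-- The grading operator `Γ` on the super Hilbert space `V = Vp ⊕ Vm` (`Γ = 1` on `V⁺ = Vp`,
`Γ = -1` on `V⁻ = Vm`). -/
def sGrading : WithLp 2 (Vp × Vm) →ₗ[ℝ] WithLp 2 (Vp × Vm) :=
  mkL2 ∘ₗ ((LinearMap.fst ℝ Vp Vm).prod (-(LinearMap.snd ℝ Vp Vm))) ∘ₗ unL2

/-- `L` is isotropic for the form `B(x, y) = ⟪J x, y⟫`. -/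
def IsIsotropicWith {W : Type*} [NormedAddCommGroup W] [InnerProductSpace ℝ W]
    (J : W →ₗ[ℝ] W) (L : Submodule ℝ W) : Prop :=
  ∀ x ∈ L, ∀ y ∈ L, (inner ℝ (J x) y : ℝ) = 0

/-- `L` is a Lagrangian with respect to the grading `J`, i.e. `J L = Lᗮ`. -/
def IsLagrangianWith {W : Type*} [NormedAddCommGroup W] [InnerProductSpace ℝ W]
    (J : W →ₗ[ℝ] W) (L : Submodule ℝ W) : Prop :=
  L.map J = Lᗮ

/-- `L ⊆ V = Vp ⊕ Vm` is `B`-isotropic, where `B(x,y) = ⟪Γ x, y⟫`. -/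
def IsIsotropic (L : Submodule ℝ (WithLp 2 (Vp × Vm))) : Prop :=
  IsIsotropicWith sGrading L

/-- The image `Γ L` of a subspace under the grading operator. -/
def gradingMap (L : Submodule ℝ (WithLp 2 (Vp × Vm))) : Submodule ℝ (WithLp 2 (Vp × Vm)) :=
  L.map sGrading

/-- `L` is a Lagrangian in the super Hilbert space `Vp ⊕ Vm`: `Γ L = Lᗮ`. -/
def IsLagrangian (L : Submodule ℝ (WithLp 2 (Vp × Vm))) : Prop :=
  IsLagrangianWith sGrading L

/-- The restricted graph `graph′(u) = graph(u) ∩ (ker u)ᗮ` of `u : V⁺ → V⁻`, inside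
`V = Vp ⊕ Vm`. -/
def graphPI (u : Vp →L[ℝ] Vm) : Submodule ℝ (WithLp 2 (Vp × Vm)) :=
  (LinearMap.ker u.toLinearMap)ᗮ.map (mkL2 ∘ₗ (LinearMap.id : Vp →ₗ[ℝ] Vp).prod u.toLinearMap)

/-- The full graph `graph(u) = {(x, u x)}` of `u : V⁺ → V⁻`, inside `V = Vp ⊕ Vm`. -/
def graphFull (u : Vp →ₗ[ℝ] Vm) : Submodule ℝ (WithLp 2 (Vp × Vm)) :=
  (⊤ : Submodule ℝ Vp).map (mkL2 ∘ₗ (LinearMap.id : Vp →ₗ[ℝ] Vp).prod u)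

/-- The restricted graph of an operator `w : V⁻ → V⁺`, viewed inside `V = Vp ⊕ Vm`
via `y ↦ (w y, y)`. -/
def graphPIrev (w : Vm →L[ℝ] Vp) : Submodule ℝ (WithLp 2 (Vp × Vm)) :=
  (LinearMap.ker w.toLinearMap)ᗮ.map (mkL2 ∘ₗ w.toLinearMap.prod (LinearMap.id : Vm →ₗ[ℝ] Vm))

/-- `u` is a partial isometry: it is isometric on `(ker u)ᗮ`. -/
def IsPartialIsometry (u : Vp →L[ℝ] Vm) : Prop :=
  ∀ x ∈ (LinearMap.ker u.toLinearMap)ᗮ, ‖u x‖ = ‖x‖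

/-- `u` is unitary: a surjective isometry. -/
def IsUnitaryOp {E F : Type*} [NormedAddCommGroup E] [InnerProductSpace ℝ E]
    [NormedAddCommGroup F] [InnerProductSpace ℝ F] (u : E →L[ℝ] F) : Prop :=
  (∀ x, ‖u x‖ = ‖x‖) ∧ Function.Surjective u

end Defs

section CorrDefs

variable {Ap Am Bp Bm : Type*} [NormedAddCommGroup Ap] [InnerProductSpace ℝ Ap]
  [NormedAddCommGroup Am] [InnerProductSpace ℝ Am]
  [NormedAddCommGroup Bp] [InnerProductSpace ℝ Bp]
  [NormedAddCommGroup Bm] [InnerProductSpace ℝ Bm]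

/-- The grading `Γ(x₀, x₁) = (-Γ₀ x₀, Γ₁ x₁)` on `Π V₀ ⊕ V₁`, where `V₀ = Ap ⊕ Am` and
`V₁ = Bp ⊕ Bm`. -/
def corrGrading :
    WithLp 2 (WithLp 2 (Ap × Am) × WithLp 2 (Bp × Bm)) →ₗ[ℝ]
      WithLp 2 (WithLp 2 (Ap × Am) × WithLp 2 (Bp × Bm)) :=
  mkL2 ∘ₗ ((-(sGrading : WithLp 2 (Ap × Am) →ₗ[ℝ] WithLp 2 (Ap × Am))).prodMap
    (sGrading : WithLp 2 (Bp × Bm) →ₗ[ℝ] WithLp 2 (Bp × Bm))) ∘ₗ unL2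

/-- `L` is a Lagrangian correspondence from `V₀ = Ap ⊕ Am` to `V₁ = Bp ⊕ Bm`, i.e. a
Lagrangian in `Π V₀ ⊕ V₁`. -/
def IsLagCorr (L : Submodule ℝ (WithLp 2 (WithLp 2 (Ap × Am) × WithLp 2 (Bp × Bm)))) : Prop :=
  IsLagrangianWith corrGrading L

/-- `L` is `B`-isotropic in `Π V₀ ⊕ V₁`. -/
def IsIsotropicCorr (L : Submodule ℝ (WithLp 2 (WithLp 2 (Ap × Am) × WithLp 2 (Bp × Bm)))) :
    Prop :=
  IsIsotropicWith corrGrading L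

/-- The graph of a map `u : (ΠV₀ ⊕ V₁)⁺ = V₀⁻ ⊕ V₁⁺ → V₀⁺ ⊕ V₁⁻ = (ΠV₀ ⊕ V₁)⁻`, as a linear
map into `ΠV₀ ⊕ V₁`; an element `(b, c)` is sent to `((u(b,c)₁, b), (c, u(b,c)₂))`. -/
def corrGraphMap (u : WithLp 2 (Am × Bp) →L[ℝ] WithLp 2 (Ap × Bm)) :
    WithLp 2 (Am × Bp) →ₗ[ℝ] WithLp 2 (WithLp 2 (Ap × Am) × WithLp 2 (Bp × Bm)) :=
  mkL2 ∘ₗ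
    ((mkL2 ∘ₗ (((LinearMap.fst ℝ Ap Bm) ∘ₗ unL2 ∘ₗ u.toLinearMap).prod
        ((LinearMap.fst ℝ Am Bp) ∘ₗ unL2))).prod
      (mkL2 ∘ₗ (((LinearMap.snd ℝ Am Bp) ∘ₗ unL2).prod
        ((LinearMap.snd ℝ Ap Bm) ∘ₗ unL2 ∘ₗ u.toLinearMap))))

/-- The graph of `u : (ΠV₀ ⊕ V₁)⁺ → (ΠV₀ ⊕ V₁)⁻` as a subspace of `ΠV₀ ⊕ V₁`. -/
def corrGraph (u : WithLp 2 (Am × Bp) →L[ℝ] WithLp 2 (Ap × Bm)) :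
    Submodule ℝ (WithLp 2 (WithLp 2 (Ap × Am) × WithLp 2 (Bp × Bm))) :=
  LinearMap.range (corrGraphMap u)

end CorrDefs

section Comp

variable {W0 W1 W2 : Type*} [NormedAddCommGroup W0] [InnerProductSpace ℝ W0]
  [NormedAddCommGroup W1] [InnerProductSpace ℝ W1]
  [NormedAddCommGroup W2] [InnerProductSpace ℝ W2]

/-- The composition `L₁₂ ∘ L₀₁ = {(x₀, x₂) | ∃ x₁, (x₀, x₁) ∈ L₀₁ ∧ (x₁, x₂) ∈ L₁₂}` of two
correspondences `L₀₁ ⊆ W0 ⊕ W1` and `L₁₂ ⊆ W1 ⊕ W2`. -/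
def compCorr (L01 : Submodule ℝ (WithLp 2 (W0 × W1))) (L12 : Submodule ℝ (WithLp 2 (W1 × W2))) :
    Submodule ℝ (WithLp 2 (W0 × W2)) :=
  Submodule.map
    (mkL2 ∘ₗ
      (((LinearMap.fst ℝ W0 W1 ∘ₗ unL2) ∘ₗ
          LinearMap.fst ℝ (WithLp 2 (W0 × W1)) (WithLp 2 (W1 × W2))).prod
        ((LinearMap.snd ℝ W1 W2 ∘ₗ unL2) ∘ₗ
          LinearMap.snd ℝ (WithLp 2 (W0 × W1)) (WithLp 2 (W1 × W2)))))
    ((L01.prod L12) ⊓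
      LinearMap.ker
        (((LinearMap.snd ℝ W0 W1 ∘ₗ unL2) ∘ₗ
            LinearMap.fst ℝ (WithLp 2 (W0 × W1)) (WithLp 2 (W1 × W2))) -
          ((LinearMap.fst ℝ W1 W2 ∘ₗ unL2) ∘ₗ
            LinearMap.snd ℝ (WithLp 2 (W0 × W1)) (WithLp 2 (W1 × W2)))))

end Comp

/-- `u` is a Hilbert–Schmidt operator: `∑ ‖u eᵢ‖²` converges for every Hilbert basis. -/
def IsHilbertSchmidt {E F : Type*} [NormedAddCommGroup E] [InnerProductSpace ℝ E]
    [NormedAddCommGroup F] [InnerProductSpace ℝ F] (u : E →L[ℝ] F) : Prop :=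
  ∀ (ι : Type) (b : HilbertBasis ι ℝ E), Summable fun i => ‖u (b i)‖ ^ 2

section AuxProof

variable {Vp Vm : Type*} [NormedAddCommGroup Vp] [InnerProductSpace ℝ Vp]
  [NormedAddCommGroup Vm] [InnerProductSpace ℝ Vm]

lemma aux_inner_grading (x y : WithLp 2 (Vp × Vm)) :
    (inner ℝ (sGrading x) y : ℝ) = inner ℝ x.fst y.fst - inner ℝ x.snd y.snd := by
  have h1 : (sGrading x).fst = x.fst := rfl
  have h2 : (sGrading x).snd = -x.snd := rfl
  simp only [WithLp.prod_inner_apply, WithLp.ofLp_fst, WithLp.ofLp_snd, h1, h2, inner_neg_left]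
  ring

lemma aux_isotropic_inner {L : Submodule ℝ (WithLp 2 (Vp × Vm))} (hL : IsIsotropic L)
    {p q : WithLp 2 (Vp × Vm)} (hp : p ∈ L) (hq : q ∈ L) :
    (inner ℝ p.fst q.fst : ℝ) = inner ℝ p.snd q.snd := by
  have := hL p hp q hq
  rw [aux_inner_grading] at this
  linarith

lemma aux_norm_snd_eq {L : Submodule ℝ (WithLp 2 (Vp × Vm))} (hL : IsIsotropic L)
    {p : WithLp 2 (Vp × Vm)} (hp : p ∈ L) : ‖p.snd‖ = ‖p.fst‖ := by
  have := aux_isotropic_inner hL hp hp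
  rw [real_inner_self_eq_norm_sq, real_inner_self_eq_norm_sq] at this
  nlinarith [norm_nonneg p.fst, norm_nonneg p.snd]

lemma aux_mem_graphPI {u : Vp →L[ℝ] Vm} {z : WithLp 2 (Vp × Vm)} :
    z ∈ graphPI u ↔ z.fst ∈ (LinearMap.ker u.toLinearMap)ᗮ ∧ u z.fst = z.snd := by
  constructor
  · rintro ⟨x, hx, rfl⟩
    exact ⟨hx, rfl⟩
  · rintro ⟨h1, h2⟩
    exact ⟨z.fst, h1, WithLp.ofLp_injective 2 (Prod.ext rfl h2)⟩

lemma aux_graphPI_closed_isotropic (u : Vp →L[ℝ] Vm) [CompleteSpace Vp]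
    (hu : IsPartialIsometry u) :
    IsClosed ((graphPI u : Submodule ℝ (WithLp 2 (Vp × Vm))) : Set (WithLp 2 (Vp × Vm))) ∧
      IsIsotropic (graphPI u) := by
  set K := (LinearMap.ker u.toLinearMap)ᗮ with hK
  constructor
  · -- closedness
    set m : Vp →ₗ[ℝ] WithLp 2 (Vp × Vm) :=
      mkL2 ∘ₗ (LinearMap.id : Vp →ₗ[ℝ] Vp).prod u.toLinearMap with hm
    have hnorm : ∀ x : Vp, ‖m x‖ ^ 2 = ‖x‖ ^ 2 + ‖u x‖ ^ 2 := fun x =>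
      WithLp.prod_norm_sq_eq_of_L2 (m x)
    set j : K →ₗ[ℝ] WithLp 2 (Vp × Vm) := m ∘ₗ K.subtype with hj
    have hbound : ∀ x : K, ‖j x‖ ≤ 2 * ‖x‖ := by
      intro x
      have h1 : ‖j x‖ ^ 2 = ‖(x : Vp)‖ ^ 2 + ‖u (x : Vp)‖ ^ 2 := hnorm _
      have h2 : ‖u (x : Vp)‖ = ‖(x : Vp)‖ := hu _ x.2
      have h3 : ‖j x‖ ^ 2 ≤ (2 * ‖x‖) ^ 2 := by
        rw [h1, h2]
        have : ‖(x : Vp)‖ = ‖x‖ := rfl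
        nlinarith [norm_nonneg x]
      nlinarith [norm_nonneg (j x), norm_nonneg x]
    set jc : K →L[ℝ] WithLp 2 (Vp × Vm) := LinearMap.mkContinuous j 2 hbound with hjc
    have hanti : AntilipschitzWith 1 jc := by
      apply AntilipschitzWith.of_le_mul_dist
      intro x y
      rw [dist_eq_norm, dist_eq_norm, ← map_sub, NNReal.coe_one, one_mul]
      have h1 : ‖jc (x - y)‖ ^ 2 = ‖((x - y : K) : Vp)‖ ^ 2 + ‖u ((x - y : K) : Vp)‖ ^ 2 :=
        hnorm _
      have h2 : ‖x - y‖ = ‖((x - y : K) : Vp)‖ := rfl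
      rw [h2]
      have := sq_nonneg (‖u ((x - y : K) : Vp)‖)
      have h3 : ‖((x - y : K) : Vp)‖ ^ 2 ≤ ‖jc (x - y)‖ ^ 2 := by rw [h1]; linarith
      have h4 : ‖((x - y : K) : Vp)‖ ≤ ‖jc (x - y)‖ := by
        nlinarith [norm_nonneg (jc (x - y)), norm_nonneg ((x - y : K) : Vp)]
      exact h4
    have hrange : Set.range jc = ((graphPI u : Submodule ℝ (WithLp 2 (Vp × Vm))) :
        Set (WithLp 2 (Vp × Vm))) := by
      ext z
      constructor
      · rintro ⟨x, rfl⟩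
        exact ⟨(x : Vp), x.2, rfl⟩
      · rintro ⟨x, hx, rfl⟩
        exact ⟨⟨x, hx⟩, rfl⟩
    rw [← hrange]
    exact hanti.isClosed_range jc.uniformContinuous
  · -- isotropy
    have hinner : ∀ x ∈ K, ∀ y ∈ K, (inner ℝ (u x) (u y) : ℝ) = inner ℝ x y := by
      intro x hx y hy
      rw [real_inner_eq_norm_add_mul_self_sub_norm_mul_self_sub_norm_mul_self_div_two,
        real_inner_eq_norm_add_mul_self_sub_norm_mul_self_sub_norm_mul_self_div_two x y]
      rw [← map_add, hu _ (K.add_mem hx hy), hu _ hx, hu _ hy]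
    rintro z ⟨x, hx, rfl⟩ w ⟨y, hy, rfl⟩
    rw [aux_inner_grading]
    have h1 : ((mkL2 ∘ₗ (LinearMap.id : Vp →ₗ[ℝ] Vp).prod u.toLinearMap) x).fst = x := rfl
    have h2 : ((mkL2 ∘ₗ (LinearMap.id : Vp →ₗ[ℝ] Vp).prod u.toLinearMap) x).snd = u x := rfl
    have h3 : ((mkL2 ∘ₗ (LinearMap.id : Vp →ₗ[ℝ] Vp).prod u.toLinearMap) y).fst = y := rfl
    have h4 : ((mkL2 ∘ₗ (LinearMap.id : Vp →ₗ[ℝ] Vp).prod u.toLinearMap) y).snd = u y := rfl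
    rw [h1, h2, h3, h4, hinner x hx y hy]
    ring

lemma aux_graphPI_unique [CompleteSpace Vp] {u u' : Vp →L[ℝ] Vm}
    (hu : IsPartialIsometry u) (hu' : IsPartialIsometry u')
    (h : graphPI u = graphPI u') : u = u' := by
  set K := (LinearMap.ker u.toLinearMap)ᗮ with hKdef
  set K' := (LinearMap.ker u'.toLinearMap)ᗮ with hK'def
  have hKK' : K = K' := by
    ext x
    constructor
    · intro hx
      have : (p2 x (u x) : WithLp 2 (Vp × Vm)) ∈ graphPI u := ⟨x, hx, rfl⟩
      rw [h, aux_mem_graphPI] at this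
      exact this.1
    · intro hx
      have : (p2 x (u' x) : WithLp 2 (Vp × Vm)) ∈ graphPI u' := ⟨x, hx, rfl⟩
      rw [← h, aux_mem_graphPI] at this
      exact this.1
  have hagree : ∀ x ∈ K, u x = u' x := by
    intro x hx
    have : (p2 x (u x) : WithLp 2 (Vp × Vm)) ∈ graphPI u := ⟨x, hx, rfl⟩
    rw [h, aux_mem_graphPI] at this
    exact this.2.symm
  have hker : Kᗮ = LinearMap.ker u.toLinearMap := by
    rw [hKdef, Submodule.orthogonal_orthogonal_eq_closure]
    exact (isClosed_ker u).submodule_topologicalClosure_eq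
  have hker' : Kᗮ = LinearMap.ker u'.toLinearMap := by
    rw [hKK', hK'def, Submodule.orthogonal_orthogonal_eq_closure]
    exact (isClosed_ker u').submodule_topologicalClosure_eq
  ext x
  have hsup : K ⊔ Kᗮ = ⊤ := Submodule.sup_orthogonal_of_hasOrthogonalProjection
  have hxmem : x ∈ K ⊔ Kᗮ := by rw [hsup]; trivial
  obtain ⟨a, ha, b, hb, rfl⟩ := Submodule.mem_sup.mp hxmem
  have hb1 : u b = 0 := by rw [← ContinuousLinearMap.coe_coe, ← LinearMap.mem_ker, ← hker]; exact hb
  have hb2 : u' b = 0 := by rw [← ContinuousLinearMap.coe_coe, ← LinearMap.mem_ker, ← hker']; exact hb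
  simp only [map_add, hb1, hb2, add_zero, ContinuousLinearMap.coe_coe]
  exact hagree a ha

end AuxProof

/-- Every closed `B`-isotropic subspace of a super Hilbert space is the
restricted graph of a unique partial isometry `u : V⁺ → V⁻`; conversely, the restricted graph
of every partial isometry is a closed `B`-isotropic subspace. -/
theorem closed_isotropic_iff_graph_partial_isometry
    {Vp Vm : Type*} [NormedAddCommGroup Vp] [InnerProductSpace ℝ Vp] [CompleteSpace Vp]
    [NormedAddCommGroup Vm] [InnerProductSpace ℝ Vm] [CompleteSpace Vm] :
    (∀ L : Submodule ℝ (WithLp 2 (Vp × Vm)), IsClosed (L : Set (WithLp 2 (Vp × Vm))) →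
      IsIsotropic L → ∃! u : Vp →L[ℝ] Vm, IsPartialIsometry u ∧ L = graphPI u) ∧
    (∀ u : Vp →L[ℝ] Vm, IsPartialIsometry u →
      IsClosed ((graphPI u : Submodule ℝ (WithLp 2 (Vp × Vm))) : Set (WithLp 2 (Vp × Vm))) ∧
        IsIsotropic (graphPI u)) := by
  constructor
  · intro L hLc hLi
    -- forward direction
    haveI : CompleteSpace L := hLc.completeSpace_coe
    set f : L →ₗ[ℝ] Vp := LinearMap.fst ℝ Vp Vm ∘ₗ unL2 ∘ₗ L.subtype with hf
    have hfapp : ∀ p : L, f p = (p : WithLp 2 (Vp × Vm)).fst := fun p => rfl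
    have hfinj : Function.Injective f := by
      intro p q hpq
      have h1 : ((p - q : L) : WithLp 2 (Vp × Vm)).fst = 0 := by
        rw [← hfapp, map_sub, hpq, sub_self]
      have h2 : ‖((p - q : L) : WithLp 2 (Vp × Vm)).snd‖ = ‖((p - q : L) : WithLp 2 (Vp × Vm)).fst‖ :=
        aux_norm_snd_eq hLi (p - q).2
      have h3 : ((p - q : L) : WithLp 2 (Vp × Vm)).snd = 0 := by
        rw [h1, norm_zero, norm_eq_zero] at h2; exact h2
      have h4 : ((p - q : L) : WithLp 2 (Vp × Vm)) = 0 := WithLp.ofLp_injective 2 (Prod.ext h1 h3)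
      have : p - q = 0 := Subtype.ext h4
      exact sub_eq_zero.mp this
    have hnorm2 : ∀ p : L, ‖(p : WithLp 2 (Vp × Vm))‖ ^ 2 = 2 * ‖f p‖ ^ 2 := by
      intro p
      have h := WithLp.prod_norm_sq_eq_of_L2 (p : WithLp 2 (Vp × Vm))
      rw [aux_norm_snd_eq hLi p.2] at h
      rw [hfapp, h]; ring
    have hfbound : ∀ p : L, ‖f p‖ ≤ 2 * ‖p‖ := by
      intro p
      have h := hnorm2 p
      have hpn : ‖p‖ = ‖(p : WithLp 2 (Vp × Vm))‖ := rfl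
      nlinarith [norm_nonneg p, norm_nonneg (f p)]
    set fc : L →L[ℝ] Vp := LinearMap.mkContinuous f 2 hfbound with hfc
    have hanti : AntilipschitzWith 2 fc := by
      apply AntilipschitzWith.of_le_mul_dist
      intro p q
      rw [dist_eq_norm, dist_eq_norm, ← map_sub]
      have h := hnorm2 (p - q)
      have hpn : ‖p - q‖ = ‖((p - q : L) : WithLp 2 (Vp × Vm))‖ := rfl
      have hfcf : fc (p - q) = f (p - q) := rfl
      rw [hfcf, hpn]
      rw [show ((2 : NNReal) : ℝ) = 2 from rfl]
      nlinarith [norm_nonneg (p - q), norm_nonneg (f (p - q)),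
        norm_nonneg ((p - q : L) : WithLp 2 (Vp × Vm))]
    set P : Submodule ℝ Vp := LinearMap.range f with hPdef
    have hPc : IsClosed (P : Set Vp) := by
      have : (P : Set Vp) = Set.range fc := by
        ext x
        simp only [hPdef, SetLike.mem_coe, LinearMap.mem_range, Set.mem_range]
        exact ⟨fun ⟨p, hp⟩ => ⟨p, hp⟩, fun ⟨p, hp⟩ => ⟨p, hp⟩⟩
      rw [this]
      exact hanti.isClosed_range fc.uniformContinuous
    haveI : CompleteSpace P := hPc.completeSpace_coe
    set g : L ≃ₗ[ℝ] P := LinearEquiv.ofInjective f hfinj with hg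
    set v : P →ₗ[ℝ] Vm :=
      (LinearMap.snd ℝ Vp Vm ∘ₗ unL2 ∘ₗ L.subtype) ∘ₗ g.symm.toLinearMap with hv
    have hvapp : ∀ x : P, v x = ((g.symm x : L) : WithLp 2 (Vp × Vm)).snd := fun x => rfl
    have hg1 : ∀ x : P, ((g.symm x : L) : WithLp 2 (Vp × Vm)).fst = (x : Vp) := by
      intro x
      have hgcoe : ∀ p : L, ((g p : P) : Vp) = f p := fun p => rfl
      have h1 : ((g (g.symm x) : P) : Vp) = f (g.symm x) := hgcoe _
      rw [g.apply_symm_apply, hfapp] at h1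
      exact h1.symm
    have hvnorm : ∀ x : P, ‖v x‖ = ‖(x : Vp)‖ := by
      intro x
      rw [hvapp, aux_norm_snd_eq hLi (g.symm x).2, hg1]
    set u0 : Vp →ₗ[ℝ] Vm := v ∘ₗ (orthogonalProjection P).toLinearMap with hu0
    have hu0app : ∀ x : Vp, u0 x = v (orthogonalProjection P x) := fun x => rfl
    have hu0bound : ∀ x : Vp, ‖u0 x‖ ≤ 1 * ‖x‖ := by
      intro x
      rw [hu0app, hvnorm, one_mul]
      calc ‖((orthogonalProjection P x : P) : Vp)‖ = ‖orthogonalProjection P x‖ := rfl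
        _ ≤ ‖orthogonalProjection P‖ * ‖x‖ := (orthogonalProjection P).le_opNorm x
        _ ≤ 1 * ‖x‖ := by
            gcongr
            exact orthogonalProjection_norm_le P
        _ = ‖x‖ := one_mul _
    set u : Vp →L[ℝ] Vm := LinearMap.mkContinuous u0 1 hu0bound with hu
    have huapp : ∀ x : Vp, u x = v (orthogonalProjection P x) := fun x => rfl
    have hker : LinearMap.ker u.toLinearMap = Pᗮ := by
      ext x
      rw [LinearMap.mem_ker]
      constructor
      · intro hx
        have h1 : v (orthogonalProjection P x) = 0 := hx
        have h2 : ‖((orthogonalProjection P x : P) : Vp)‖ = 0 := by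
          rw [← hvnorm, h1, norm_zero]
        have h3 : orthogonalProjection P x = 0 := by
          have := norm_eq_zero.mp h2
          exact Subtype.ext this
        exact Submodule.orthogonalProjectionOnto_eq_zero_iff.mp h3
      · intro hx
        rw [ContinuousLinearMap.coe_coe, huapp, Submodule.orthogonalProjectionOnto_eq_zero_iff.mpr hx, map_zero]
    have hkerorth : (LinearMap.ker u.toLinearMap)ᗮ = P := by
      rw [hker, Submodule.orthogonal_orthogonal]
    have huP : ∀ x : P, u (x : Vp) = v x := by
      intro x
      rw [huapp, orthogonalProjection_mem_subspace_eq_self]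
    have hupi : IsPartialIsometry u := by
      intro x hx
      rw [hkerorth] at hx
      have : u x = v ⟨x, hx⟩ := huP ⟨x, hx⟩
      rw [this, hvnorm]
    have hgraph : L = graphPI u := by
      ext z
      rw [aux_mem_graphPI, hkerorth]
      constructor
      · intro hz
        have hz1 : z.fst ∈ P := ⟨⟨z, hz⟩, (hfapp ⟨z, hz⟩)⟩
        refine ⟨hz1, ?_⟩
        have he : (⟨z.fst, hz1⟩ : P) = g ⟨z, hz⟩ := by
          apply Subtype.ext
          have hgcoe : ((g ⟨z, hz⟩ : P) : Vp) = f ⟨z, hz⟩ := rfl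
          rw [hgcoe, hfapp]
        rw [huP ⟨z.fst, hz1⟩, hvapp, he, g.symm_apply_apply]
      · rintro ⟨hz1, hz2⟩
        have h1 : ((g.symm ⟨z.fst, hz1⟩ : L) : WithLp 2 (Vp × Vm)).fst = z.fst := hg1 _
        have h2 : ((g.symm ⟨z.fst, hz1⟩ : L) : WithLp 2 (Vp × Vm)).snd = z.snd := by
          rw [← hvapp, ← huP ⟨z.fst, hz1⟩]
          exact hz2
        have : ((g.symm ⟨z.fst, hz1⟩ : L) : WithLp 2 (Vp × Vm)) = z := WithLp.ofLp_injective 2 (Prod.ext h1 h2)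
        rw [← this]
        exact (g.symm ⟨z.fst, hz1⟩).2
    refine ⟨u, ⟨hupi, hgraph⟩, ?_⟩
    rintro u' ⟨h1, h2⟩
    exact aux_graphPI_unique h1 hupi (h2.symm.trans hgraph)
  · intro u hu
    exact aux_graphPI_closed_isotropic u hu
end
end

section
/- Let T : V₀ → V₁ be an invertible closed densely defined operator between super Hilbert spaces with grading operators Γ₀, Γ₁. Then graph(T) is a Lagrangian in ΠV₀ ⊕ V₁ if and only if T⁻¹ = Γ₀ T* Γ₁. -/
noncomputable section

open Submodule ContinuousLinearMap

section AuxProof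

open RealInnerProductSpace

private lemma mem_map_of_inverse {R M N : Type*} [CommRing R] [AddCommGroup M] [Module R M]
    [AddCommGroup N] [Module R N] (f : M →ₗ[R] N) (g : N →ₗ[R] M)
    (hgf : ∀ x, g (f x) = x) (hfg : ∀ y, f (g y) = y) (S : Submodule R M) (z : N) :
    z ∈ S.map f ↔ g z ∈ S := by
  constructor
  · rintro ⟨w, hw, rfl⟩; rw [hgf]; exact hw
  · intro h; exact ⟨g z, h, hfg z⟩

variable {Vp Vm : Type*} [NormedAddCommGroup Vp] [InnerProductSpace ℝ Vp]
  [NormedAddCommGroup Vm] [InnerProductSpace ℝ Vm]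

private lemma p2_fst' {α β : Type*} [AddCommGroup α] [Module ℝ α] [AddCommGroup β] [Module ℝ β]
    (a : α) (b : β) : (p2 a b).fst = a := rfl

private lemma p2_snd' {α β : Type*} [AddCommGroup α] [Module ℝ α] [AddCommGroup β] [Module ℝ β]
    (a : α) (b : β) : (p2 a b).snd = b := rfl

@[simp] private lemma sGrading_invol (x : WithLp 2 (Vp × Vm)) :
    sGrading (sGrading x) = x :=
  WithLp.ofLp_injective 2 (Prod.ext rfl (neg_neg x.snd))

section Corr
variable {Ap Am Bp Bm : Type*} [NormedAddCommGroup Ap] [InnerProductSpace ℝ Ap]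
  [NormedAddCommGroup Am] [InnerProductSpace ℝ Am]
  [NormedAddCommGroup Bp] [InnerProductSpace ℝ Bp]
  [NormedAddCommGroup Bm] [InnerProductSpace ℝ Bm]

private lemma corrGrading_invol
    (z : WithLp 2 (WithLp 2 (Ap × Am) × WithLp 2 (Bp × Bm))) :
    corrGrading (corrGrading z) = z := by
  refine WithLp.ofLp_injective 2 (Prod.ext ?_ ?_)
  · show -(sGrading (-(sGrading z.fst))) = z.fst
    rw [map_neg, neg_neg, sGrading_invol]
  · show sGrading (sGrading z.snd) = z.snd
    rw [sGrading_invol]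

end Corr

private lemma graph_orth_key {E F : Type*} [NormedAddCommGroup E] [InnerProductSpace ℝ E]
    [NormedAddCommGroup F] [InnerProductSpace ℝ F] [CompleteSpace E] [CompleteSpace F]
    (T : E →ₗ.[ℝ] F) (hT : Dense (T.domain : Set E)) (u : E) (v : F) :
    (∀ x : T.domain, ⟪(x : E), u⟫ + ⟪T x, v⟫ = 0) ↔ (v, -u) ∈ T.adjoint.graph := by
  constructor
  · intro h
    have key : ∀ x : T.domain, ⟪-u, (x : E)⟫ = ⟪v, T x⟫ := by
      intro x
      rw [inner_neg_left]
      linarith [h x, real_inner_comm u (x : E), real_inner_comm v (T x)]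
    have hv : v ∈ T.adjoint.domain := T.mem_adjoint_domain_of_exists v ⟨-u, key⟩
    exact (T.adjoint.mem_graph_iff).mpr
      ⟨⟨v, hv⟩, rfl, LinearPMap.adjoint_apply_eq hT ⟨v, hv⟩ key⟩
  · intro h x
    rw [LinearPMap.mem_graph_iff] at h
    obtain ⟨y, hy1, hy2⟩ := h
    have hv : (y : F) = v := hy1
    have hu : T.adjoint y = -u := hy2
    have hf := LinearPMap.adjoint_isFormalAdjoint hT y x
    rw [hu, hv, inner_neg_left] at hf
    linarith [hf, real_inner_comm u (x : E), real_inner_comm v (T x)]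

end AuxProof

/-- For an invertible closed densely defined operator `T : V₀ → V₁`,
`graph(T)` is a Lagrangian in `ΠV₀ ⊕ V₁` if and only if `T⁻¹ = Γ₀ T* Γ₁` (stated as an
equality of graphs: the graph of `T⁻¹` is the flip of `graph T`, and the graph of
`Γ₀ T* Γ₁` is the image of the graph of the adjoint `T†` under `Γ₁ × Γ₀`). -/
theorem graph_lagrangian_iff_inverse_eq_graded_adjoint
    {V0p V0m V1p V1m : Type*}
    [NormedAddCommGroup V0p] [InnerProductSpace ℝ V0p] [CompleteSpace V0p]
    [NormedAddCommGroup V0m] [InnerProductSpace ℝ V0m] [CompleteSpace V0m]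
    [NormedAddCommGroup V1p] [InnerProductSpace ℝ V1p] [CompleteSpace V1p]
    [NormedAddCommGroup V1m] [InnerProductSpace ℝ V1m] [CompleteSpace V1m]
    (T : WithLp 2 (V0p × V0m) →ₗ.[ℝ] WithLp 2 (V1p × V1m))
    (hdom : Dense (T.domain : Set (WithLp 2 (V0p × V0m))))
    (hclosed : IsClosed ((T.graph : Submodule ℝ (WithLp 2 (V0p × V0m) × WithLp 2 (V1p × V1m))) :
      Set (WithLp 2 (V0p × V0m) × WithLp 2 (V1p × V1m))))
    (hinj : ∀ x : T.domain, T x = 0 → (x : WithLp 2 (V0p × V0m)) = 0)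
    (hran : Dense (Set.range fun x : T.domain => T x)) :
    IsLagCorr (T.graph.comap
        (unL2 : WithLp 2 (WithLp 2 (V0p × V0m) × WithLp 2 (V1p × V1m)) →ₗ[ℝ] _)) ↔
      T.graph.map ((LinearMap.snd ℝ (WithLp 2 (V0p × V0m)) (WithLp 2 (V1p × V1m))).prod
          (LinearMap.fst ℝ (WithLp 2 (V0p × V0m)) (WithLp 2 (V1p × V1m)))) =
        (T.adjoint).graph.map
          ((sGrading : WithLp 2 (V1p × V1m) →ₗ[ℝ] WithLp 2 (V1p × V1m)).prodMap
            (sGrading : WithLp 2 (V0p × V0m) →ₗ[ℝ] WithLp 2 (V0p × V0m))) := by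
  classical
  set H0 := WithLp 2 (V0p × V0m)
  set H1 := WithLp 2 (V1p × V1m)
  set Q : Prop := ∀ (a : H0) (b : H1),
      (a, b) ∈ T.graph ↔ (sGrading b, sGrading a) ∈ T.adjoint.graph with hQdef
  set L : Submodule ℝ (WithLp 2 (H0 × H1)) := T.graph.comap unL2 with hLdef
  have hmap : ∀ z : WithLp 2 (H0 × H1),
      z ∈ L.map corrGrading ↔ (-(sGrading z.fst), sGrading z.snd) ∈ T.graph := by
    intro z
    rw [mem_map_of_inverse (corrGrading (Ap := V0p) (Am := V0m) (Bp := V1p) (Bm := V1m)) corrGrading corrGrading_invol corrGrading_invol,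
      Submodule.mem_comap]
    exact Iff.rfl
  have horth : ∀ z : WithLp 2 (H0 × H1),
      z ∈ Lᗮ ↔ (z.snd, -z.fst) ∈ T.adjoint.graph := by
    intro z
    rw [Submodule.mem_orthogonal, ← graph_orth_key T hdom z.fst z.snd]
    constructor
    · intro h x
      have hm : (p2 (x : H0) (T x) : WithLp 2 (H0 × H1)) ∈ L := by
        rw [hLdef, Submodule.mem_comap]
        exact T.mem_graph x
      have h2 := h _ hm
      rw [WithLp.prod_inner_apply] at h2
      exact h2
    · intro h w hw
      rw [hLdef, Submodule.mem_comap, LinearPMap.mem_graph_iff] at hw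
      obtain ⟨x, hx1, hx2⟩ := hw
      have e1 : w.ofLp.1 = (x : H0) := hx1.symm
      have e2 : w.ofLp.2 = T x := hx2.symm
      rw [WithLp.prod_inner_apply, e1, e2]
      exact h x
  have h1 : IsLagCorr L ↔ Q := by
    constructor
    · intro hLag a b
      have h := SetLike.ext_iff.mp hLag (p2 (-(sGrading a)) (sGrading b))
      rw [hmap, horth] at h
      simp only [p2_fst', p2_snd', map_neg, neg_neg, sGrading_invol] at h
      convert h using 3 <;> exact (neg_neg _).symm
    · intro hQ
      ext z
      rw [hmap z, horth z]
      have h := hQ (-(sGrading z.fst)) (sGrading z.snd)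
      simpa only [map_neg, neg_neg, sGrading_invol] using h
  have h2 : (T.graph.map ((LinearMap.snd ℝ H0 H1).prod (LinearMap.fst ℝ H0 H1)) =
      (T.adjoint).graph.map ((sGrading : H1 →ₗ[ℝ] H1).prodMap (sGrading : H0 →ₗ[ℝ] H0))) ↔ Q := by
    have hflip1 : ∀ x : H0 × H1,
        ((LinearMap.snd ℝ H1 H0).prod (LinearMap.fst ℝ H1 H0))
          (((LinearMap.snd ℝ H0 H1).prod (LinearMap.fst ℝ H0 H1)) x) = x := fun x => rfl
    have hflip2 : ∀ x : H1 × H0,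
        ((LinearMap.snd ℝ H0 H1).prod (LinearMap.fst ℝ H0 H1))
          (((LinearMap.snd ℝ H1 H0).prod (LinearMap.fst ℝ H1 H0)) x) = x := fun x => rfl
    have hGG : ∀ x : H1 × H0,
        ((sGrading : H1 →ₗ[ℝ] H1).prodMap (sGrading : H0 →ₗ[ℝ] H0))
          (((sGrading : H1 →ₗ[ℝ] H1).prodMap (sGrading : H0 →ₗ[ℝ] H0)) x) = x :=
      fun x => Prod.ext (sGrading_invol x.fst) (sGrading_invol x.snd)
    constructor
    · intro hEq a b
      have h := SetLike.ext_iff.mp hEq (b, a)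
      rw [mem_map_of_inverse _ _ hflip1 hflip2,
        mem_map_of_inverse _ _ hGG hGG] at h
      simpa only [LinearMap.prod_apply, LinearMap.prodMap_apply, Function.prod,
        LinearMap.fst_apply, LinearMap.snd_apply] using h
    · intro hQ
      ext z
      rw [mem_map_of_inverse _ _ hflip1 hflip2, mem_map_of_inverse _ _ hGG hGG]
      have h := hQ z.snd z.fst
      simpa only [LinearMap.prod_apply, LinearMap.prodMap_apply, Function.prod,
        LinearMap.fst_apply, LinearMap.snd_apply] using h
  exact h1.trans h2.symm
end
end

section
/- With notation as in the correspondence between a Lagrangian in general position written as graph(T) and graph(u): the operator T is unitary if and only if the diagonal blocks of u vanish, u₀₀ = u₁₁ = 0; in that case T is block diagonal (T₊₋ = T₋₊ = 0) and u₁₀, u₀₁ are unitary. -/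
noncomputable section

open Submodule ContinuousLinearMap

/-- The full graph of a bounded operator `S : E → F`, inside `E ⊕ F`. -/
def graphFullCorr {E F : Type*} [NormedAddCommGroup E] [InnerProductSpace ℝ E]
    [NormedAddCommGroup F] [InnerProductSpace ℝ F] (S : E →L[ℝ] F) :
    Submodule ℝ (WithLp 2 (E × F)) :=
  (⊤ : Submodule ℝ E).map (mkL2 ∘ₗ (LinearMap.id : E →ₗ[ℝ] E).prod S.toLinearMap)

section AuxLemmas

variable {α β : Type*} [NormedAddCommGroup α] [InnerProductSpace ℝ α]
  [NormedAddCommGroup β] [InnerProductSpace ℝ β]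

lemma norm_p2_sq (a : α) (b : β) : ‖p2 a b‖ ^ 2 = ‖a‖ ^ 2 + ‖b‖ ^ 2 :=
  WithLp.prod_norm_sq_eq_of_L2 _

lemma p2_inj {a a' : α} {b b' : β} (h : p2 a b = p2 a' b') : a = a' ∧ b = b' :=
  ⟨congrArg (fun x => (WithLp.ofLp x).1) h, congrArg (fun x => (WithLp.ofLp x).2) h⟩

lemma mem_graphFullCorr_iff (S : α →L[ℝ] β) (q : WithLp 2 (α × β)) :
    q ∈ graphFullCorr S ↔ ∃ e, p2 e (S e) = q := by
  constructor
  · rintro ⟨e, -, rfl⟩; exact ⟨e, rfl⟩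
  · rintro ⟨e, rfl⟩; exact ⟨e, trivial, rfl⟩

lemma norm_eq_of_sq_eq {a : α} {b : β} (h : ‖a‖ ^ 2 = ‖b‖ ^ 2) : ‖a‖ = ‖b‖ := by
  have : |‖a‖| = |‖b‖| := by
    rw [← Real.sqrt_sq_eq_abs, ← Real.sqrt_sq_eq_abs, h]
  rwa [abs_of_nonneg (norm_nonneg a), abs_of_nonneg (norm_nonneg b)] at this

end AuxLemmas


set_option maxHeartbeats 1600000 in
/-- The operator `T` with `graph(T) = graph(u)` (a Lagrangian in general
position) is unitary if and only if the diagonal blocks of `u` vanish; in that case `T` is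
block diagonal and `u₁₀`, `u₀₁` are unitary. -/
theorem graph_operator_unitary_iff_offdiagonal
    {V0p V0m V1p V1m : Type*}
    [NormedAddCommGroup V0p] [InnerProductSpace ℝ V0p] [CompleteSpace V0p]
    [NormedAddCommGroup V0m] [InnerProductSpace ℝ V0m] [CompleteSpace V0m]
    [NormedAddCommGroup V1p] [InnerProductSpace ℝ V1p] [CompleteSpace V1p]
    [NormedAddCommGroup V1m] [InnerProductSpace ℝ V1m] [CompleteSpace V1m]
    (u : WithLp 2 (V0m × V1p) →L[ℝ] WithLp 2 (V0p × V1m))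
    (u00 : V0m →L[ℝ] V0p) (u01 : V1p →L[ℝ] V0p) (u10 : V0m →L[ℝ] V1m) (u11 : V1p →L[ℝ] V1m)
    (hblocks : ∀ x : WithLp 2 (V0m × V1p),
      u x = p2 (u00 x.fst + u01 x.snd) (u10 x.fst + u11 x.snd))
    (huni : IsUnitaryOp u)
    (hgen1 : ∀ p ∈ corrGraph u, p.snd = 0 → p = 0)
    (hgen2 : ∀ p ∈ corrGraph u, p.fst = 0 → p = 0) :
    ((∃ S : WithLp 2 (V0p × V0m) →L[ℝ] WithLp 2 (V1p × V1m), IsUnitaryOp S ∧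
        graphFullCorr S = corrGraph u) ↔ (u00 = 0 ∧ u11 = 0)) ∧
    (∀ S : WithLp 2 (V0p × V0m) →L[ℝ] WithLp 2 (V1p × V1m), IsUnitaryOp S →
      graphFullCorr S = corrGraph u →
        ((∀ x : V0p, (S (p2 x 0)).snd = 0) ∧ (∀ y : V0m, (S (p2 0 y)).fst = 0) ∧
          IsUnitaryOp u01 ∧ IsUnitaryOp u10)) := by
  obtain ⟨hiso, hsurj⟩ := huni
  have hu_apply : ∀ (b : V0m) (c : V1p),
      u (p2 b c) = p2 (u00 b + u01 c) (u10 b + u11 c) := fun b c => hblocks (p2 b c)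
  have hnorm_u : ∀ (b : V0m) (c : V1p),
      ‖u00 b + u01 c‖ ^ 2 + ‖u10 b + u11 c‖ ^ 2 = ‖b‖ ^ 2 + ‖c‖ ^ 2 := by
    intro b c
    have h := congrArg (fun t => t ^ 2) (hiso (p2 b c))
    rw [hu_apply] at h
    simpa only [norm_p2_sq] using h
  have hmap : ∀ z : WithLp 2 (V0m × V1p),
      corrGraphMap u z = p2 (p2 (u z).fst z.fst) (p2 z.snd (u z).snd) := fun _ => rfl
  -- surjectivity of u01, u10 given vanishing diagonal
  have hsurj01 : u00 = 0 → Function.Surjective u01 := by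
    intro h00 a
    obtain ⟨z, hz⟩ := hsurj (p2 a 0)
    rw [hblocks z, h00] at hz
    have := (p2_inj hz).1
    exact ⟨z.snd, by simpa using this⟩
  have hsurj10 : u11 = 0 → Function.Surjective u10 := by
    intro h11 d
    obtain ⟨z, hz⟩ := hsurj (p2 0 d)
    rw [hblocks z, h11] at hz
    have := (p2_inj hz).2
    exact ⟨z.fst, by simpa using this⟩
  -- the core argument, for any unitary S with matching graph
  have core : ∀ S : WithLp 2 (V0p × V0m) →L[ℝ] WithLp 2 (V1p × V1m), IsUnitaryOp S →
      graphFullCorr S = corrGraph u →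
      (u00 = 0 ∧ u11 = 0) ∧ (∀ x : V0p, (S (p2 x 0)).snd = 0) ∧
        (∀ y : V0m, (S (p2 0 y)).fst = 0) ∧ IsUnitaryOp u01 ∧ IsUnitaryOp u10 := by
    intro S hSuni hS
    obtain ⟨hSiso, _⟩ := hSuni
    have hstar : ∀ (b : V0m) (c : V1p),
        S (p2 (u00 b + u01 c) b) = p2 c (u10 b + u11 c) := by
      intro b c
      have hmem : p2 (p2 (u00 b + u01 c) b) (p2 c (u10 b + u11 c)) ∈ corrGraph u := by
        refine ⟨p2 b c, ?_⟩
        rw [hmap, hu_apply]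
        rfl
      rw [← hS] at hmem
      obtain ⟨e, he⟩ := (mem_graphFullCorr_iff S _).1 hmem
      obtain ⟨he1, he2⟩ := p2_inj he
      rwa [he1] at he2
    -- u00 = 0
    have h00 : u00 = 0 := by
      ext b
      have hA := hstar b 0
      simp only [map_zero, add_zero] at hA
      have hB := congrArg (fun t => t ^ 2) (hSiso (p2 (u00 b) b))
      rw [hA] at hB
      simp only [norm_p2_sq, norm_zero] at hB
      have hC := hnorm_u b 0
      simp only [map_zero, add_zero, norm_zero] at hC
      have h0 : ‖u00 b‖ ^ 2 = 0 := by nlinarith [sq_nonneg ‖u00 b‖]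
      have h0' : ‖u00 b‖ = 0 := by
        nlinarith [norm_nonneg (u00 b), sq_nonneg ‖u00 b‖, sq_abs ‖u00 b‖]
      simp only [ContinuousLinearMap.zero_apply]
      exact norm_eq_zero.mp h0'
    have h11 : u11 = 0 := by
      ext c
      have hA := hstar 0 c
      simp only [map_zero, zero_add] at hA
      have hB := congrArg (fun t => t ^ 2) (hSiso (p2 (u01 c) 0))
      rw [hA] at hB
      simp only [norm_p2_sq, norm_zero] at hB
      have hC := hnorm_u 0 c
      simp only [map_zero, zero_add, norm_zero] at hC
      have h0 : ‖u11 c‖ ^ 2 = 0 := by nlinarith [sq_nonneg ‖u11 c‖]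
      have h0' : ‖u11 c‖ = 0 := by
        nlinarith [norm_nonneg (u11 c), sq_nonneg ‖u11 c‖, sq_abs ‖u11 c‖]
      simp only [ContinuousLinearMap.zero_apply]
      exact norm_eq_zero.mp h0'
    have hiso01 : ∀ c, ‖u01 c‖ = ‖c‖ := by
      intro c
      have hC := hnorm_u 0 c
      rw [h11] at hC
      simp only [map_zero, zero_add, norm_zero, ContinuousLinearMap.zero_apply, add_zero] at hC
      have : ‖u01 c‖ ^ 2 = ‖c‖ ^ 2 := by nlinarith
      exact norm_eq_of_sq_eq this
    have hiso10 : ∀ b, ‖u10 b‖ = ‖b‖ := by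
      intro b
      have hC := hnorm_u b 0
      rw [h00] at hC
      simp only [map_zero, add_zero, norm_zero, ContinuousLinearMap.zero_apply, zero_add] at hC
      have : ‖u10 b‖ ^ 2 = ‖b‖ ^ 2 := by nlinarith
      exact norm_eq_of_sq_eq this
    refine ⟨⟨h00, h11⟩, ?_, ?_, ⟨hiso01, hsurj01 h00⟩, ⟨hiso10, hsurj10 h11⟩⟩
    · intro x
      obtain ⟨c, rfl⟩ := hsurj01 h00 x
      have hA := hstar 0 c
      rw [h00, h11] at hA
      simp only [map_zero, zero_add, add_zero, ContinuousLinearMap.zero_apply] at hA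
      rw [hA]
      rfl
    · intro y
      have hA := hstar y 0
      rw [h00] at hA
      simp only [map_zero, add_zero, ContinuousLinearMap.zero_apply] at hA
      rw [hA]
      rfl
  refine ⟨⟨fun ⟨S, hSuni, hS⟩ => (core S hSuni hS).1, ?_⟩,
    fun S hSuni hS => (core S hSuni hS).2⟩
  rintro ⟨h00, h11⟩
  -- construct the unitary S from u01, u10
  have hiso01 : ∀ c, ‖u01 c‖ = ‖c‖ := by
    intro c
    have hC := hnorm_u 0 c
    rw [h11] at hC
    simp only [map_zero, zero_add, norm_zero, ContinuousLinearMap.zero_apply, add_zero] at hC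
    exact norm_eq_of_sq_eq (by nlinarith)
  have hiso10 : ∀ b, ‖u10 b‖ = ‖b‖ := by
    intro b
    have hC := hnorm_u b 0
    rw [h00] at hC
    simp only [map_zero, add_zero, norm_zero, ContinuousLinearMap.zero_apply, zero_add] at hC
    exact norm_eq_of_sq_eq (by nlinarith)
  let e01 : V1p ≃ₗᵢ[ℝ] V0p :=
    LinearIsometryEquiv.ofSurjective ⟨u01.toLinearMap, hiso01⟩ (hsurj01 h00)
  let e10 : V0m ≃ₗᵢ[ℝ] V1m :=
    LinearIsometryEquiv.ofSurjective ⟨u10.toLinearMap, hiso10⟩ (hsurj10 h11)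
  have he01 : ∀ c, e01 c = u01 c := fun _ => rfl
  have he10 : ∀ b, e10 b = u10 b := fun _ => rfl
  let Slin : WithLp 2 (V0p × V0m) →ₗ[ℝ] WithLp 2 (V1p × V1m) :=
    mkL2 ∘ₗ ((e01.symm.toLinearEquiv.toLinearMap).prodMap
      (e10.toLinearEquiv.toLinearMap)) ∘ₗ unL2
  have hSlin : ∀ z : WithLp 2 (V0p × V0m),
      Slin z = p2 (e01.symm z.fst) (e10 z.snd) := fun _ => rfl
  have hSnorm : ∀ z, ‖Slin z‖ = ‖z‖ := by
    intro z
    refine norm_eq_of_sq_eq ?_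
    rw [hSlin, norm_p2_sq]
    have h1 : ‖e01.symm z.fst‖ = ‖z.fst‖ := e01.symm.norm_map _
    have h2 : ‖e10 z.snd‖ = ‖z.snd‖ := e10.norm_map _
    rw [h1, h2, ← norm_p2_sq z.fst z.snd]
    rfl
  let S : WithLp 2 (V0p × V0m) →L[ℝ] WithLp 2 (V1p × V1m) :=
    Slin.mkContinuous 1 (fun z => by rw [hSnorm, one_mul])
  have hSapp : ∀ z, S z = p2 (e01.symm z.fst) (e10 z.snd) := fun z => hSlin z
  refine ⟨S, ⟨fun z => by rw [hSapp, ← hSlin, hSnorm], ?_⟩, ?_⟩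
  · intro w
    refine ⟨p2 (e01 w.fst) (e10.symm w.snd), ?_⟩
    rw [hSapp]
    show p2 (e01.symm (e01 w.fst)) (e10 (e10.symm w.snd)) = w
    rw [e01.symm_apply_apply, e10.apply_symm_apply]
    rfl
  · -- graph equality
    have hu' : ∀ z : WithLp 2 (V0m × V1p), u z = p2 (u01 z.snd) (u10 z.fst) := by
      intro z
      rw [hblocks z, h00, h11]
      simp only [ContinuousLinearMap.zero_apply, zero_add, add_zero]
    ext q
    rw [mem_graphFullCorr_iff]
    constructor
    · rintro ⟨e, rfl⟩
      refine ⟨p2 e.snd (e01.symm e.fst), ?_⟩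
      rw [hmap, hu', hSapp]
      have h1 : u01 (e01.symm e.fst) = e.fst := by rw [← he01]; exact e01.apply_symm_apply _
      have h2 : e10 e.snd = u10 e.snd := he10 _
      show p2 (p2 (u01 (e01.symm e.fst)) e.snd) (p2 (e01.symm e.fst) (u10 e.snd)) =
        p2 (p2 e.fst e.snd) (p2 (e01.symm e.fst) (e10 e.snd))
      rw [h1, h2]
    · rintro ⟨z, rfl⟩
      refine ⟨p2 (u01 z.snd) z.fst, ?_⟩
      rw [hmap, hu', hSapp]
      have h1 : e01.symm (u01 z.snd) = z.snd := by rw [← he01]; exact e01.symm_apply_apply _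
      have h2 : e10 z.fst = u10 z.fst := he10 _
      show p2 (p2 (u01 z.snd) z.fst) (p2 (e01.symm (u01 z.snd)) (e10 z.fst)) =
        p2 (p2 (u01 z.snd) z.fst) (p2 z.snd (u10 z.fst))
      rw [h1, h2]
end
end

section
/- Let L₀₁ = graph(u) ⊆ ΠV₀ ⊕ V₁ and L₁₂ = graph(v) ⊆ ΠV₁ ⊕ V₂ be Lagrangian correspondences given by unitaries u, v with blocks u_{ij}, v_{ij}. If 1 - v₁₁u₁₁ and 1 - u₁₁v₁₁ have closed range, then the composition L₁₂ ∘ L₀₁ is a Lagrangian in ΠV₀ ⊕ V₂, equal to the graph of the unitary w with blocks w₀₀ = u₀₀ + u₀₁ X v₁₁ u₁₀, w₀₂ = u₀₁ X v₁₂, w₂₀ = v₂₁ Y u₁₀, w₂₂ = v₂₂ + v₂₁ Y u₁₁ v₁₂, where X and Y are the generalized (Moore–Penrose) inverses of 1 - v₁₁u₁₁ and 1 - u₁₁v₁₁ respectively. -/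
noncomputable section

open Submodule ContinuousLinearMap

noncomputable section
open Submodule ContinuousLinearMap RealInnerProductSpace

section Aux

variable {E F : Type*} [NormedAddCommGroup E] [InnerProductSpace ℝ E]
  [NormedAddCommGroup F] [InnerProductSpace ℝ F]

theorem wext {α β : Type*} {x y : WithLp 2 (α × β)} (h1 : x.fst = y.fst)
    (h2 : x.snd = y.snd) : x = y :=
  by cases x; cases y; exact congrArg _ (Prod.ext h1 h2)

theorem aux_sq_eq {a b : ℝ} (ha : 0 ≤ a) (hb : 0 ≤ b) (h : a ^ 2 = b ^ 2) : a = b := by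
  nlinarith [sq_nonneg (a - b), sq_nonneg (a + b)]

theorem aux_normsq (x : WithLp 2 (E × F)) : ‖x‖ ^ 2 = ‖x.fst‖ ^ 2 + ‖x.snd‖ ^ 2 := by
  rw [← real_inner_self_eq_norm_sq, ← real_inner_self_eq_norm_sq, ← real_inner_self_eq_norm_sq]
  rfl

theorem aux_norm_zero {E : Type*} [NormedAddCommGroup E] {x : E} (h : ‖x‖ ^ 2 ≤ 0) : x = 0 := by
  have h2 : ‖x‖ ^ 2 = 0 := le_antisymm h (sq_nonneg _)
  have h3 : ‖x‖ = 0 := pow_eq_zero_iff (two_ne_zero) |>.mp h2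
  exact norm_eq_zero.mp h3

theorem aux_unitary_inner {T : E →L[ℝ] F} (hT : ∀ x, ‖T x‖ = ‖x‖) (x y : E) :
    ⟪T x, T y⟫ = ⟪x, y⟫ :=
  (LinearIsometry.mk (T : E →ₗ[ℝ] F) hT).inner_map_map x y

variable [CompleteSpace E] [CompleteSpace F]

/-- For a surjective isometry, `T† T = 1` and `T T† = 1`. -/
theorem aux_unitary_adj (T : E →L[ℝ] F)
    (hT : (∀ x, ‖T x‖ = ‖x‖) ∧ Function.Surjective T) :
    (∀ x, adjoint T (T x) = x) ∧ (∀ y, T (adjoint T y) = y) := by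
  have h1 : ∀ x, adjoint T (T x) = x := fun x =>
    ext_inner_right ℝ fun y => by rw [adjoint_inner_left]; exact aux_unitary_inner hT.1 x y
  refine ⟨h1, fun y => ?_⟩
  obtain ⟨x, rfl⟩ := hT.2 y
  rw [h1]

/-- Solvability from a generalized inverse: if `r ⟂ ker A†` then `A (X r) = r`. -/
theorem aux_gi_solve (A : E →L[ℝ] F) (X : F →L[ℝ] E)
    (hX2 : ∀ b ∈ LinearMap.range A.toLinearMap, A (X b) = b) (r : F)
    (hr : ∀ z, adjoint A z = 0 → ⟪r, z⟫ = 0) : A (X r) = r := by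
  have hmem : r ∈ ((LinearMap.range A.toLinearMap : Submodule ℝ F).topologicalClosure : Set F) := by
    rw [← Submodule.orthogonal_orthogonal_eq_closure]
    rw [SetLike.mem_coe, Submodule.mem_orthogonal]
    rintro z hz
    have hz0 : adjoint A z = 0 := by
      apply ext_inner_right ℝ
      intro y
      rw [adjoint_inner_left, inner_zero_left]
      have := hz (A y) ⟨y, rfl⟩
      rwa [real_inner_comm] at this
    rw [real_inner_comm]
    exact hr z hz0
  have hclosed : IsClosed {x : F | A (X x) = x} :=
    isClosed_eq (A.continuous.comp X.continuous) continuous_id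
  have hsub : ((LinearMap.range A.toLinearMap : Submodule ℝ F) : Set F) ⊆ {x : F | A (X x) = x} :=
    fun b hb => hX2 b hb
  have := closure_minimal hsub hclosed
  rw [Submodule.topologicalClosure_coe] at hmem
  exact this hmem

/-- The adjoint of a generalized inverse is a generalized inverse of the adjoint. -/
theorem aux_gi_adjoint (A : E →L[ℝ] F) (X : F →L[ℝ] E)
    (hX2 : ∀ b ∈ LinearMap.range A.toLinearMap, A (X b) = b) :
    ∀ b ∈ LinearMap.range (adjoint A).toLinearMap, adjoint A (adjoint X b) = b := by
  rintro _ ⟨c, rfl⟩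
  simp only [ContinuousLinearMap.coe_coe]
  apply ext_inner_right ℝ
  intro y
  rw [adjoint_inner_left, adjoint_inner_left, adjoint_inner_left,
    hX2 (A y) ⟨y, rfl⟩, ← adjoint_inner_left]

end Aux

section AuxCorr
open RealInnerProductSpace

variable {Ap Am Bp Bm : Type*} [NormedAddCommGroup Ap] [InnerProductSpace ℝ Ap]
  [NormedAddCommGroup Am] [InnerProductSpace ℝ Am]
  [NormedAddCommGroup Bp] [InnerProductSpace ℝ Bp]
  [NormedAddCommGroup Bm] [InnerProductSpace ℝ Bm]
  [CompleteSpace Ap] [CompleteSpace Am] [CompleteSpace Bp] [CompleteSpace Bm]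

-- definitional computation tests
example (w : WithLp 2 (Am × Bp) →L[ℝ] WithLp 2 (Ap × Bm)) (z : WithLp 2 (Am × Bp)) :
    corrGraphMap w z = p2 (p2 (w z).fst z.fst) (p2 z.snd (w z).snd) := rfl

example (w : WithLp 2 (Am × Bp) →L[ℝ] WithLp 2 (Ap × Bm)) (z : WithLp 2 (Am × Bp)) :
    corrGrading (corrGraphMap w z) = p2 (p2 (-(w z).fst) z.fst) (p2 z.snd (-(w z).snd)) := by
  exact wext (wext rfl (neg_neg _)) rfl

example (x y : WithLp 2 (WithLp 2 (Ap × Am) × WithLp 2 (Bp × Bm))) :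
    ⟪x, y⟫ = (⟪x.fst.fst, y.fst.fst⟫ + ⟪x.fst.snd, y.fst.snd⟫)
      + (⟪x.snd.fst, y.snd.fst⟫ + ⟪x.snd.snd, y.snd.snd⟫) := rfl

theorem aux_grading_graph (w : WithLp 2 (Am × Bp) →L[ℝ] WithLp 2 (Ap × Bm))
    (z : WithLp 2 (Am × Bp)) :
    corrGrading (corrGraphMap w z) = p2 (p2 (-(w z).fst) z.fst) (p2 z.snd (-(w z).snd)) :=
  wext (wext rfl (neg_neg _)) rfl

theorem aux_isLagCorr_corrGraph (w : WithLp 2 (Am × Bp) →L[ℝ] WithLp 2 (Ap × Bm))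
    (hw : IsUnitaryOp w) : IsLagCorr (corrGraph w) := by
  obtain ⟨hadj1, hadj2⟩ := aux_unitary_adj w hw
  have hiso : ∀ x y : WithLp 2 (Am × Bp), ⟪w x, w y⟫ = ⟪x, y⟫ := aux_unitary_inner hw.1
  show Submodule.map corrGrading (corrGraph w) = (corrGraph w)ᗮ
  apply Submodule.ext
  intro m
  constructor
  · intro hm
    obtain ⟨l, hl, rfl⟩ := Submodule.mem_map.mp hm
    obtain ⟨z, rfl⟩ := LinearMap.mem_range.mp hl
    rw [Submodule.mem_orthogonal]
    rintro l' hl'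
    obtain ⟨z', rfl⟩ := LinearMap.mem_range.mp hl'
    rw [aux_grading_graph]
    show (⟪(w z').fst, -(w z).fst⟫ + ⟪z'.fst, z.fst⟫)
      + (⟪z'.snd, z.snd⟫ + ⟪(w z').snd, -(w z).snd⟫) = 0
    have h1 : ⟪w z', w z⟫ = ⟪z', z⟫ := hiso z' z
    have h2 : ⟪w z', w z⟫ = ⟪(w z').fst, (w z).fst⟫ + ⟪(w z').snd, (w z).snd⟫ := rfl
    have h3 : (⟪z', z⟫ : ℝ) = ⟪z'.fst, z.fst⟫ + ⟪z'.snd, z.snd⟫ := rfl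
    rw [inner_neg_right, inner_neg_right]
    linarith [h1, h2, h3]
  · intro hm
    -- m ∈ Lᗮ; recover the graph point
    have hkey : ∀ z' : WithLp 2 (Am × Bp),
        ⟪z', adjoint w (p2 m.fst.fst m.snd.snd) + p2 m.fst.snd m.snd.fst⟫ = 0 := by
      intro z'
      have := (Submodule.mem_orthogonal _ m).mp hm (corrGraphMap w z')
        (LinearMap.mem_range.mpr ⟨z', rfl⟩)
      rw [inner_add_right, adjoint_inner_right]
      have hexp : (⟪corrGraphMap w z', m⟫ : ℝ)
          = (⟪(w z').fst, m.fst.fst⟫ + ⟪z'.fst, m.fst.snd⟫)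
            + (⟪z'.snd, m.snd.fst⟫ + ⟪(w z').snd, m.snd.snd⟫) := rfl
      have hwp : (⟪w z', p2 m.fst.fst m.snd.snd⟫ : ℝ)
          = ⟪(w z').fst, m.fst.fst⟫ + ⟪(w z').snd, m.snd.snd⟫ := rfl
      have hzp : (⟪z', p2 m.fst.snd m.snd.fst⟫ : ℝ)
          = ⟪z'.fst, m.fst.snd⟫ + ⟪z'.snd, m.snd.fst⟫ := rfl
      rw [hwp, hzp]
      rw [hexp] at this
      linarith
    have h0 : adjoint w (p2 m.fst.fst m.snd.snd) + p2 m.fst.snd m.snd.fst = 0 := by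
      have := hkey (adjoint w (p2 m.fst.fst m.snd.snd) + p2 m.fst.snd m.snd.fst)
      exact inner_self_eq_zero.mp this
    have h0' : adjoint w (p2 m.fst.fst m.snd.snd) = -(p2 m.fst.snd m.snd.fst) :=
      eq_neg_of_add_eq_zero_left h0
    refine Submodule.mem_map.mpr ⟨corrGraphMap w (p2 m.fst.snd m.snd.fst),
      LinearMap.mem_range.mpr ⟨_, rfl⟩, ?_⟩
    rw [aux_grading_graph]
    have hw2 : w (p2 m.fst.snd m.snd.fst) = -(p2 m.fst.fst m.snd.snd) := by
      have h5 : w (-(p2 m.fst.snd m.snd.fst)) = p2 m.fst.fst m.snd.snd := by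
        rw [← h0', hadj2]
      rw [map_neg] at h5
      exact neg_eq_iff_eq_neg.mp h5
    refine wext (wext ?_ rfl) (wext rfl ?_)
    · show -(w (p2 m.fst.snd m.snd.fst)).fst = m.fst.fst
      rw [hw2]; exact neg_neg _
    · show -(w (p2 m.fst.snd m.snd.fst)).snd = m.snd.snd
      rw [hw2]; exact neg_neg _

end AuxCorr

section Statement15

variable {V0p V0m V1p V1m V2p V2m : Type*}
  [NormedAddCommGroup V0p] [InnerProductSpace ℝ V0p] [CompleteSpace V0p]
  [NormedAddCommGroup V0m] [InnerProductSpace ℝ V0m] [CompleteSpace V0m]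
  [NormedAddCommGroup V1p] [InnerProductSpace ℝ V1p] [CompleteSpace V1p]
  [NormedAddCommGroup V1m] [InnerProductSpace ℝ V1m] [CompleteSpace V1m]
  [NormedAddCommGroup V2p] [InnerProductSpace ℝ V2p] [CompleteSpace V2p]
  [NormedAddCommGroup V2m] [InnerProductSpace ℝ V2m] [CompleteSpace V2m]

/-- The operator `1 - v₁₁ u₁₁` on `V₁⁺`. -/
def opA (u11 : V1p →L[ℝ] V1m) (v11 : V1m →L[ℝ] V1p) : V1p →L[ℝ] V1p :=
  ContinuousLinearMap.id ℝ V1p - v11.comp u11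

/-- The operator `1 - u₁₁ v₁₁` on `V₁⁻`. -/
def opB (u11 : V1p →L[ℝ] V1m) (v11 : V1m →L[ℝ] V1p) : V1m →L[ℝ] V1m :=
  ContinuousLinearMap.id ℝ V1m - u11.comp v11

/-- The unitary `w` describing the composed Lagrangian correspondence: its block matrix is
`[[u₀₀ + u₀₁Xv₁₁u₁₀, u₀₁Xv₁₂], [v₂₁Yu₁₀, v₂₂ + v₂₁Yu₁₁v₁₂]]`. -/
def compUnitary (u00 : V0m →L[ℝ] V0p) (u01 : V1p →L[ℝ] V0p) (u10 : V0m →L[ℝ] V1m)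
    (u11 : V1p →L[ℝ] V1m) (v11 : V1m →L[ℝ] V1p) (v12 : V2p →L[ℝ] V1p) (v21 : V1m →L[ℝ] V2m)
    (v22 : V2p →L[ℝ] V2m) (X : V1p →L[ℝ] V1p) (Y : V1m →L[ℝ] V1m) :
    WithLp 2 (V0m × V2p) →L[ℝ] WithLp 2 (V0p × V2m) :=
  (((WithLp.prodContinuousLinearEquiv 2 ℝ V0p V2m).symm :
      (V0p × V2m) →L[ℝ] WithLp 2 (V0p × V2m)).comp
    ((((u00 + u01.comp (X.comp (v11.comp u10))).coprod (u01.comp (X.comp v12))).prod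
      ((v21.comp (Y.comp u10)).coprod (v22 + v21.comp (Y.comp (u11.comp v12))))))).comp
    ((WithLp.prodContinuousLinearEquiv 2 ℝ V0m V2p : WithLp 2 (V0m × V2p) →L[ℝ] V0m × V2p))

set_option maxHeartbeats 1000000

/-- If `1 - v₁₁u₁₁` and `1 - u₁₁v₁₁` have closed range, then the
composition `L₁₂ ∘ L₀₁` of the Lagrangian correspondences `L₀₁ = graph(u)` and
`L₁₂ = graph(v)` is a Lagrangian in `ΠV₀ ⊕ V₂`, namely the graph of the unitary `w` given
by the generalized inverses `X` of `1 - v₁₁u₁₁` and `Y` of `1 - u₁₁v₁₁`. -/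
theorem compCorr_lagrangian_of_closed_range
    (u : WithLp 2 (V0m × V1p) →L[ℝ] WithLp 2 (V0p × V1m))
    (v : WithLp 2 (V1m × V2p) →L[ℝ] WithLp 2 (V1p × V2m))
    (u00 : V0m →L[ℝ] V0p) (u01 : V1p →L[ℝ] V0p) (u10 : V0m →L[ℝ] V1m) (u11 : V1p →L[ℝ] V1m)
    (v11 : V1m →L[ℝ] V1p) (v12 : V2p →L[ℝ] V1p) (v21 : V1m →L[ℝ] V2m) (v22 : V2p →L[ℝ] V2m)
    (hub : ∀ x : WithLp 2 (V0m × V1p),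
      u x = p2 (u00 x.fst + u01 x.snd) (u10 x.fst + u11 x.snd))
    (hvb : ∀ y : WithLp 2 (V1m × V2p),
      v y = p2 (v11 y.fst + v12 y.snd) (v21 y.fst + v22 y.snd))
    (hu : IsUnitaryOp u) (hv : IsUnitaryOp v)
    (hAcr : IsClosed ((LinearMap.range (opA u11 v11).toLinearMap : Submodule ℝ V1p) : Set V1p))
    (hBcr : IsClosed ((LinearMap.range (opB u11 v11).toLinearMap : Submodule ℝ V1m) : Set V1m))
    (X : V1p →L[ℝ] V1p) (Y : V1m →L[ℝ] V1m)
    (hX1 : ∀ a ∈ (LinearMap.ker (opA u11 v11).toLinearMap)ᗮ, X (opA u11 v11 a) = a)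
    (hX2 : ∀ b ∈ LinearMap.range (opA u11 v11).toLinearMap, opA u11 v11 (X b) = b)
    (hX3 : LinearMap.ker X.toLinearMap = (LinearMap.range (opA u11 v11).toLinearMap)ᗮ)
    (hY1 : ∀ a ∈ (LinearMap.ker (opB u11 v11).toLinearMap)ᗮ, Y (opB u11 v11 a) = a)
    (hY2 : ∀ b ∈ LinearMap.range (opB u11 v11).toLinearMap, opB u11 v11 (Y b) = b)
    (hY3 : LinearMap.ker Y.toLinearMap = (LinearMap.range (opB u11 v11).toLinearMap)ᗮ) :
    IsLagCorr (Ap := V0p) (Am := V0m) (Bp := V2p) (Bm := V2m)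
        (compCorr (W1 := WithLp 2 (V1p × V1m)) (corrGraph u) (corrGraph v)) ∧
      IsUnitaryOp (compUnitary u00 u01 u10 u11 v11 v12 v21 v22 X Y) ∧
      compCorr (W0 := WithLp 2 (V0p × V0m)) (W1 := WithLp 2 (V1p × V1m))
          (W2 := WithLp 2 (V2p × V2m)) (corrGraph u) (corrGraph v) =
        corrGraph (compUnitary u00 u01 u10 u11 v11 v12 v21 v22 X Y) := by
  classical
  have hAapp : ∀ k : V1p, opA u11 v11 k = k - v11 (u11 k) := by
    intro k
    simp [opA, ContinuousLinearMap.sub_apply, ContinuousLinearMap.comp_apply]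
  have hBapp : ∀ k : V1m, opB u11 v11 k = k - u11 (v11 k) := by
    intro k
    simp [opB, ContinuousLinearMap.sub_apply, ContinuousLinearMap.comp_apply]
  obtain ⟨huad1, huad2⟩ := aux_unitary_adj u hu
  obtain ⟨hvad1, hvad2⟩ := aux_unitary_adj v hv
  -- block formula for the adjoint of `u`
  have hu'b : ∀ (a : V0p) (d : V1m),
      adjoint u (p2 a d)
        = p2 (adjoint u00 a + adjoint u10 d) (adjoint u01 a + adjoint u11 d) := by
    intro a d
    apply ext_inner_right ℝ
    intro w
    rw [ContinuousLinearMap.adjoint_inner_left, hub w]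
    show (⟪a, u00 w.fst + u01 w.snd⟫ + ⟪d, u10 w.fst + u11 w.snd⟫ : ℝ)
      = ⟪adjoint u00 a + adjoint u10 d, w.fst⟫ + ⟪adjoint u01 a + adjoint u11 d, w.snd⟫
    simp only [inner_add_left, inner_add_right, ContinuousLinearMap.adjoint_inner_left]
    ring
  have hv'b : ∀ (a : V1p) (d : V2m),
      adjoint v (p2 a d)
        = p2 (adjoint v11 a + adjoint v21 d) (adjoint v12 a + adjoint v22 d) := by
    intro a d
    apply ext_inner_right ℝ
    intro w
    rw [ContinuousLinearMap.adjoint_inner_left, hvb w]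
    show (⟪a, v11 w.fst + v12 w.snd⟫ + ⟪d, v21 w.fst + v22 w.snd⟫ : ℝ)
      = ⟪adjoint v11 a + adjoint v21 d, w.fst⟫ + ⟪adjoint v12 a + adjoint v22 d, w.snd⟫
    simp only [inner_add_left, inner_add_right, ContinuousLinearMap.adjoint_inner_left]
    ring
  -- row identities (`u u† = 1`, `v v† = 1`)
  have hUrow : ∀ (a : V0p) (d : V1m),
      u00 (adjoint u00 a + adjoint u10 d) + u01 (adjoint u01 a + adjoint u11 d) = a ∧
      u10 (adjoint u00 a + adjoint u10 d) + u11 (adjoint u01 a + adjoint u11 d) = d := by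
    intro a d
    have h := huad2 (p2 a d)
    rw [hu'b a d, hub] at h
    exact Prod.ext_iff.mp (congrArg WithLp.ofLp h)
  have hVrow : ∀ (a : V1p) (d : V2m),
      v11 (adjoint v11 a + adjoint v21 d) + v12 (adjoint v12 a + adjoint v22 d) = a ∧
      v21 (adjoint v11 a + adjoint v21 d) + v22 (adjoint v12 a + adjoint v22 d) = d := by
    intro a d
    have h := hvad2 (p2 a d)
    rw [hv'b a d, hvb] at h
    exact Prod.ext_iff.mp (congrArg WithLp.ofLp h)
  -- norm identities
  have hnormu : ∀ z : WithLp 2 (V0m × V1p),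
      ‖u00 z.fst + u01 z.snd‖ ^ 2 + ‖u10 z.fst + u11 z.snd‖ ^ 2
        = ‖z.fst‖ ^ 2 + ‖z.snd‖ ^ 2 := by
    intro z
    have h2 : ‖u z‖ ^ 2 = ‖z‖ ^ 2 := by rw [hu.1 z]
    rw [hub z, aux_normsq, aux_normsq z] at h2
    exact h2
  have hnormv : ∀ z : WithLp 2 (V1m × V2p),
      ‖v11 z.fst + v12 z.snd‖ ^ 2 + ‖v21 z.fst + v22 z.snd‖ ^ 2
        = ‖z.fst‖ ^ 2 + ‖z.snd‖ ^ 2 := by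
    intro z
    have h2 : ‖v z‖ ^ 2 = ‖z‖ ^ 2 := by rw [hv.1 z]
    rw [hvb z, aux_normsq, aux_normsq z] at h2
    exact h2
  have hNu : ∀ c : V1p, ‖u01 c‖ ^ 2 + ‖u11 c‖ ^ 2 = ‖c‖ ^ 2 := by
    intro c
    have h : ‖u00 (0 : V0m) + u01 c‖ ^ 2 + ‖u10 (0 : V0m) + u11 c‖ ^ 2
        = ‖(0 : V0m)‖ ^ 2 + ‖c‖ ^ 2 := hnormu (p2 0 c)
    simpa using h
  have hNv : ∀ y : V1m, ‖v11 y‖ ^ 2 + ‖v21 y‖ ^ 2 = ‖y‖ ^ 2 := by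
    intro y
    have h : ‖v11 y + v12 (0 : V2p)‖ ^ 2 + ‖v21 y + v22 (0 : V2p)‖ ^ 2
        = ‖y‖ ^ 2 + ‖(0 : V2p)‖ ^ 2 := hnormv (p2 y 0)
    simpa using h
  have hu'iso : ∀ y, ‖adjoint u y‖ = ‖y‖ := by
    intro y
    obtain ⟨x, rfl⟩ := hu.2 y
    rw [huad1]
    exact (hu.1 x).symm
  have hv'iso : ∀ y, ‖adjoint v y‖ = ‖y‖ := by
    intro y
    obtain ⟨x, rfl⟩ := hv.2 y
    rw [hvad1]
    exact (hv.1 x).symm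
  have hNu' : ∀ d : V1m, ‖adjoint u10 d‖ ^ 2 + ‖adjoint u11 d‖ ^ 2 = ‖d‖ ^ 2 := by
    intro d
    have h : ‖adjoint u (p2 (0 : V0p) d)‖ ^ 2 = ‖p2 (0 : V0p) d‖ ^ 2 := by rw [hu'iso]
    rw [hu'b, aux_normsq, aux_normsq] at h
    have h' : ‖adjoint u00 (0 : V0p) + adjoint u10 d‖ ^ 2
        + ‖adjoint u01 (0 : V0p) + adjoint u11 d‖ ^ 2 = ‖(0 : V0p)‖ ^ 2 + ‖d‖ ^ 2 := h
    simpa using h'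
  have hNv' : ∀ a : V1p, ‖adjoint v11 a‖ ^ 2 + ‖adjoint v12 a‖ ^ 2 = ‖a‖ ^ 2 := by
    intro a
    have h : ‖adjoint v (p2 a (0 : V2m))‖ ^ 2 = ‖p2 a (0 : V2m)‖ ^ 2 := by rw [hv'iso]
    rw [hv'b, aux_normsq, aux_normsq] at h
    have h' : ‖adjoint v11 a + adjoint v21 (0 : V2m)‖ ^ 2
        + ‖adjoint v12 a + adjoint v22 (0 : V2m)‖ ^ 2 = ‖a‖ ^ 2 + ‖(0 : V2m)‖ ^ 2 := h
    simpa using h'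
  -- kernel lemmas
  have hKA : ∀ k : V1p, opA u11 v11 k = 0 → u01 k = 0 ∧ v21 (u11 k) = 0 := by
    intro k hk
    rw [hAapp k] at hk
    have hk' : v11 (u11 k) = k := (sub_eq_zero.mp hk).symm
    have h1 := hNv (u11 k)
    rw [hk'] at h1
    have h2 := hNu k
    constructor
    · apply aux_norm_zero; nlinarith [sq_nonneg ‖v21 (u11 k)‖]
    · apply aux_norm_zero; nlinarith [sq_nonneg ‖u01 k‖]
  have hKB : ∀ k : V1m, opB u11 v11 k = 0 → v21 k = 0 ∧ u01 (v11 k) = 0 := by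
    intro k hk
    rw [hBapp k] at hk
    have hk' : u11 (v11 k) = k := (sub_eq_zero.mp hk).symm
    have h1 := hNu (v11 k)
    rw [hk'] at h1
    have h2 := hNv k
    constructor
    · apply aux_norm_zero; nlinarith [sq_nonneg ‖u01 (v11 k)‖]
    · apply aux_norm_zero; nlinarith [sq_nonneg ‖v21 k‖]
  have hA'eq : adjoint (opA u11 v11)
      = ContinuousLinearMap.id ℝ V1p - (adjoint u11).comp (adjoint v11) := by
    rw [opA, map_sub, adjoint_id, ContinuousLinearMap.adjoint_comp]
  have hA'app : ∀ z : V1p, adjoint (opA u11 v11) z = z - adjoint u11 (adjoint v11 z) := by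
    intro z
    rw [hA'eq]
    simp [ContinuousLinearMap.sub_apply, ContinuousLinearMap.comp_apply]
  have hKA' : ∀ z : V1p, adjoint (opA u11 v11) z = 0 →
      adjoint v12 z = 0 ∧ adjoint u10 (adjoint v11 z) = 0 := by
    intro z hz
    rw [hA'app z] at hz
    have hk' : adjoint u11 (adjoint v11 z) = z := (sub_eq_zero.mp hz).symm
    have h1 := hNu' (adjoint v11 z)
    rw [hk'] at h1
    have h2 := hNv' z
    constructor
    · apply aux_norm_zero; nlinarith [sq_nonneg ‖adjoint u10 (adjoint v11 z)‖]
    · apply aux_norm_zero; nlinarith [sq_nonneg ‖adjoint v12 z‖]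
  -- solving helpers
  have hsolve : ∀ (b : V0m) (c : V2p),
      opA u11 v11 (X (v11 (u10 b) + v12 c)) = v11 (u10 b) + v12 c := by
    intro b c
    apply aux_gi_solve _ _ hX2
    intro z hz
    obtain ⟨h1, h2⟩ := hKA' z hz
    have e1 : (⟪v11 (u10 b), z⟫ : ℝ) = 0 := by
      rw [← ContinuousLinearMap.adjoint_inner_right v11, ← ContinuousLinearMap.adjoint_inner_right u10,
        h2, inner_zero_right]
    have e2 : (⟪v12 c, z⟫ : ℝ) = 0 := by
      rw [← ContinuousLinearMap.adjoint_inner_right v12, h1, inner_zero_right]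
    rw [inner_add_left, e1, e2, add_zero]
  have hu01eq : ∀ (x : V1p) (r : V1p), opA u11 v11 x = r → u01 x = u01 (X r) := by
    intro x r hr
    have h2 : opA u11 v11 (X r) = r := hX2 r ⟨x, hr⟩
    have h3 : opA u11 v11 (x - X r) = 0 := by rw [map_sub, hr, h2, sub_self]
    have h4 := (hKA _ h3).1
    rw [map_sub, sub_eq_zero] at h4
    exact h4
  have hv21eq : ∀ (y : V1m) (s : V1m), opB u11 v11 y = s → v21 y = v21 (Y s) := by
    intro y s hs
    have h2 : opB u11 v11 (Y s) = s := hY2 s ⟨y, hs⟩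
    have h3 : opB u11 v11 (y - Y s) = 0 := by rw [map_sub, hs, h2, sub_self]
    have h4 := (hKB _ h3).1
    rw [map_sub, sub_eq_zero] at h4
    exact h4
  -- block components of `u`, `v`
  have hubf : ∀ z : WithLp 2 (V0m × V1p), (u z).fst = u00 z.fst + u01 z.snd :=
    fun z => congrArg WithLp.fst (hub z)
  have hubs : ∀ z : WithLp 2 (V0m × V1p), (u z).snd = u10 z.fst + u11 z.snd :=
    fun z => congrArg WithLp.snd (hub z)
  have hvbf : ∀ z : WithLp 2 (V1m × V2p), (v z).fst = v11 z.fst + v12 z.snd :=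
    fun z => congrArg WithLp.fst (hvb z)
  have hvbs : ∀ z : WithLp 2 (V1m × V2p), (v z).snd = v21 z.fst + v22 z.snd :=
    fun z => congrArg WithLp.snd (hvb z)
  -- formula for the composed unitary
  have hWapp : ∀ z : WithLp 2 (V0m × V2p),
      compUnitary u00 u01 u10 u11 v11 v12 v21 v22 X Y z
        = p2 (u00 z.fst + u01 (X (v11 (u10 z.fst))) + u01 (X (v12 z.snd)))
             (v21 (Y (u10 z.fst)) + (v22 z.snd + v21 (Y (u11 (v12 z.snd))))) := by
    intro z
    simp [compUnitary, ContinuousLinearMap.coprod_apply, ContinuousLinearMap.add_apply,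
      ContinuousLinearMap.comp_apply, ContinuousLinearMap.prod_apply]
  -- membership in the composition
  have hmemC : ∀ m : WithLp 2 (WithLp 2 (V0p × V0m) × WithLp 2 (V2p × V2m)),
      m ∈ compCorr (W0 := WithLp 2 (V0p × V0m)) (W1 := WithLp 2 (V1p × V1m))
          (W2 := WithLp 2 (V2p × V2m)) (corrGraph u) (corrGraph v) ↔
        ∃ (z1 : WithLp 2 (V0m × V1p)) (z2 : WithLp 2 (V1m × V2p)),
          (corrGraphMap u z1).snd = (corrGraphMap v z2).fst ∧
          p2 (corrGraphMap u z1).fst (corrGraphMap v z2).snd = m := by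
    intro m
    constructor
    · intro hm
      obtain ⟨pq, hpq, hfm⟩ := Submodule.mem_map.mp hm
      obtain ⟨hprod, hker⟩ := Submodule.mem_inf.mp hpq
      obtain ⟨z1, hz1⟩ := LinearMap.mem_range.mp (Submodule.mem_prod.mp hprod).1
      obtain ⟨z2, hz2⟩ := LinearMap.mem_range.mp (Submodule.mem_prod.mp hprod).2
      have hker' : pq.1.snd - pq.2.fst = 0 := LinearMap.mem_ker.mp hker
      refine ⟨z1, z2, ?_, ?_⟩
      · rw [hz1, hz2]
        exact sub_eq_zero.mp hker'
      · rw [hz1, hz2]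
        exact hfm
    · rintro ⟨z1, z2, hmatch, rfl⟩
      refine Submodule.mem_map.mpr ⟨(corrGraphMap u z1, corrGraphMap v z2),
        Submodule.mem_inf.mpr ⟨Submodule.mem_prod.mpr
          ⟨LinearMap.mem_range.mpr ⟨z1, rfl⟩, LinearMap.mem_range.mpr ⟨z2, rfl⟩⟩,
          LinearMap.mem_ker.mpr ?_⟩, rfl⟩
      show (corrGraphMap u z1).snd - (corrGraphMap v z2).fst = 0
      rw [hmatch, sub_self]
  -- the main identification of the composition with the graph of `w`
  have hEq : compCorr (W0 := WithLp 2 (V0p × V0m)) (W1 := WithLp 2 (V1p × V1m))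
          (W2 := WithLp 2 (V2p × V2m)) (corrGraph u) (corrGraph v)
      = corrGraph (compUnitary u00 u01 u10 u11 v11 v12 v21 v22 X Y) := by
    apply Submodule.ext
    intro m
    rw [hmemC m]
    constructor
    · rintro ⟨z1, z2, hmatch, rfl⟩
      have hm' : p2 z1.snd (u z1).snd = p2 (v z2).fst z2.fst := hmatch
      have hm1 : z1.snd = v11 z2.fst + v12 z2.snd := by
        have h : z1.snd = (v z2).fst := congrArg WithLp.fst hm'
        rw [hvbf z2] at h
        exact h
      have hm2 : u10 z1.fst + u11 z1.snd = z2.fst := by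
        have h : (u z1).snd = z2.fst := congrArg WithLp.snd hm'
        rw [hubs z1] at h
        exact h
      have hAx : opA u11 v11 z1.snd = v11 (u10 z1.fst) + v12 z2.snd := by
        have e : v11 z2.fst = v11 (u10 z1.fst) + v11 (u11 z1.snd) := by
          rw [← hm2, map_add]
        rw [hAapp]
        nth_rewrite 1 [hm1]
        rw [e]
        abel
      have hfst : u01 z1.snd = u01 (X (v11 (u10 z1.fst) + v12 z2.snd)) := hu01eq _ _ hAx
      have hBy : opB u11 v11 z2.fst = u10 z1.fst + u11 (v12 z2.snd) := by
        have e : u11 z1.snd = u11 (v11 z2.fst) + u11 (v12 z2.snd) := by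
          rw [← map_add, ← hm1]
        rw [hBapp]
        nth_rewrite 1 [← hm2]
        rw [e]
        abel
      have hsnd : v21 z2.fst = v21 (Y (u10 z1.fst + u11 (v12 z2.snd))) := hv21eq _ _ hBy
      apply LinearMap.mem_range.mpr
      refine ⟨p2 z1.fst z2.snd, ?_⟩
      have hc1 : (compUnitary u00 u01 u10 u11 v11 v12 v21 v22 X Y (p2 z1.fst z2.snd)).fst
          = (u z1).fst := by
        have h : (compUnitary u00 u01 u10 u11 v11 v12 v21 v22 X Y (p2 z1.fst z2.snd)).fst
            = u00 z1.fst + u01 (X (v11 (u10 z1.fst))) + u01 (X (v12 z2.snd)) :=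
          congrArg WithLp.fst (hWapp (p2 z1.fst z2.snd))
        rw [h, hubf z1, hfst, map_add X, map_add u01]
        abel
      have hc2 : (compUnitary u00 u01 u10 u11 v11 v12 v21 v22 X Y (p2 z1.fst z2.snd)).snd
          = (v z2).snd := by
        have h : (compUnitary u00 u01 u10 u11 v11 v12 v21 v22 X Y (p2 z1.fst z2.snd)).snd
            = v21 (Y (u10 z1.fst)) + (v22 z2.snd + v21 (Y (u11 (v12 z2.snd)))) :=
          congrArg WithLp.snd (hWapp (p2 z1.fst z2.snd))
        rw [h, hvbs z2, hsnd, map_add Y, map_add v21]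
        abel
      show p2 (p2 (compUnitary u00 u01 u10 u11 v11 v12 v21 v22 X Y (p2 z1.fst z2.snd)).fst z1.fst)
          (p2 z2.snd (compUnitary u00 u01 u10 u11 v11 v12 v21 v22 X Y (p2 z1.fst z2.snd)).snd)
        = p2 (p2 (u z1).fst z1.fst) (p2 z2.snd (v z2).snd)
      rw [hc1, hc2]
    · intro hm
      obtain ⟨z, rfl⟩ := LinearMap.mem_range.mp hm
      obtain ⟨xx, hxx⟩ : ∃ xx, xx = X (v11 (u10 z.fst) + v12 z.snd) := ⟨_, rfl⟩
      have hAXxx : opA u11 v11 xx = v11 (u10 z.fst) + v12 z.snd := by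
        rw [hxx]; exact hsolve z.fst z.snd
      have exx : xx = v11 (u10 z.fst) + v12 z.snd + v11 (u11 xx) := by
        have e := hAXxx
        rw [hAapp, sub_eq_iff_eq_add] at e
        exact e
      refine ⟨p2 z.fst xx, p2 (u10 z.fst + u11 xx) z.snd, ?_, ?_⟩
      · show p2 xx (u (p2 z.fst xx)).snd
          = p2 (v (p2 (u10 z.fst + u11 xx) z.snd)).fst (u10 z.fst + u11 xx)
        refine wext ?_ ?_
        · show xx = (v (p2 (u10 z.fst + u11 xx) z.snd)).fst
          rw [hvbf (p2 (u10 z.fst + u11 xx) z.snd)]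
          show xx = v11 (u10 z.fst + u11 xx) + v12 z.snd
          rw [map_add v11]
          conv_lhs => rw [exx]
          abel
        · show (u (p2 z.fst xx)).snd = u10 z.fst + u11 xx
          rw [hubs (p2 z.fst xx)]
          rfl
      · have hW1 : (compUnitary u00 u01 u10 u11 v11 v12 v21 v22 X Y z).fst
            = u00 z.fst + u01 (X (v11 (u10 z.fst))) + u01 (X (v12 z.snd)) :=
          congrArg WithLp.fst (hWapp z)
        have hW2 : (compUnitary u00 u01 u10 u11 v11 v12 v21 v22 X Y z).snd
            = v21 (Y (u10 z.fst)) + (v22 z.snd + v21 (Y (u11 (v12 z.snd)))) :=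
          congrArg WithLp.snd (hWapp z)
        show p2 (p2 (u (p2 z.fst xx)).fst z.fst)
            (p2 z.snd (v (p2 (u10 z.fst + u11 xx) z.snd)).snd)
          = p2 (p2 (compUnitary u00 u01 u10 u11 v11 v12 v21 v22 X Y z).fst z.fst)
            (p2 z.snd (compUnitary u00 u01 u10 u11 v11 v12 v21 v22 X Y z).snd)
        refine wext (wext ?_ rfl) (wext rfl ?_)
        · show (u (p2 z.fst xx)).fst
            = (compUnitary u00 u01 u10 u11 v11 v12 v21 v22 X Y z).fst
          rw [hubf (p2 z.fst xx), hW1]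
          show u00 z.fst + u01 xx = _
          rw [hxx, map_add X, map_add u01]
          abel
        · show (v (p2 (u10 z.fst + u11 xx) z.snd)).snd
            = (compUnitary u00 u01 u10 u11 v11 v12 v21 v22 X Y z).snd
          rw [hvbs (p2 (u10 z.fst + u11 xx) z.snd), hW2]
          show v21 (u10 z.fst + u11 xx) + v22 z.snd = _
          have hv11y : v11 (u10 z.fst + u11 xx) = xx - v12 z.snd := by
            rw [map_add]
            conv_rhs => rw [exx]
            abel
          have hBy : opB u11 v11 (u10 z.fst + u11 xx) = u10 z.fst + u11 (v12 z.snd) := by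
            rw [hBapp]
            show (u10 z.fst + u11 xx) - u11 (v11 (u10 z.fst + u11 xx)) = _
            rw [hv11y, map_sub]
            abel
          have hs := hv21eq _ _ hBy
          rw [hs, map_add Y, map_add v21]
          abel
  -- the composed map is isometric
  have hWiso : ∀ z : WithLp 2 (V0m × V2p),
      ‖compUnitary u00 u01 u10 u11 v11 v12 v21 v22 X Y z‖ = ‖z‖ := by
    intro z
    obtain ⟨xx, hxx⟩ : ∃ xx, xx = X (v11 (u10 z.fst) + v12 z.snd) := ⟨_, rfl⟩
    have hAXxx : opA u11 v11 xx = v11 (u10 z.fst) + v12 z.snd := by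
      rw [hxx]; exact hsolve z.fst z.snd
    have exx : xx = v11 (u10 z.fst) + v12 z.snd + v11 (u11 xx) := by
      have e := hAXxx
      rw [hAapp, sub_eq_iff_eq_add] at e
      exact e
    have hW1 : (compUnitary u00 u01 u10 u11 v11 v12 v21 v22 X Y z).fst
        = u00 z.fst + u01 (X (v11 (u10 z.fst))) + u01 (X (v12 z.snd)) :=
      congrArg WithLp.fst (hWapp z)
    have hW2 : (compUnitary u00 u01 u10 u11 v11 v12 v21 v22 X Y z).snd
        = v21 (Y (u10 z.fst)) + (v22 z.snd + v21 (Y (u11 (v12 z.snd)))) :=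
      congrArg WithLp.snd (hWapp z)
    have hWf : (compUnitary u00 u01 u10 u11 v11 v12 v21 v22 X Y z).fst
        = u00 z.fst + u01 xx := by
      rw [hW1, hxx, map_add X, map_add u01]
      abel
    have hv11y : v11 (u10 z.fst + u11 xx) = xx - v12 z.snd := by
      rw [map_add]
      conv_rhs => rw [exx]
      abel
    have hBy : opB u11 v11 (u10 z.fst + u11 xx) = u10 z.fst + u11 (v12 z.snd) := by
      rw [hBapp]
      show (u10 z.fst + u11 xx) - u11 (v11 (u10 z.fst + u11 xx)) = _
      rw [hv11y, map_sub]
      abel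
    have hWs : (compUnitary u00 u01 u10 u11 v11 v12 v21 v22 X Y z).snd
        = v21 (u10 z.fst + u11 xx) + v22 z.snd := by
      have hs := hv21eq _ _ hBy
      rw [hW2, hs, map_add Y, map_add v21]
      abel
    have h1 : ‖u00 z.fst + u01 xx‖ ^ 2 + ‖u10 z.fst + u11 xx‖ ^ 2
        = ‖z.fst‖ ^ 2 + ‖xx‖ ^ 2 := hnormu (p2 z.fst xx)
    have h2 : ‖v11 (u10 z.fst + u11 xx) + v12 z.snd‖ ^ 2
        + ‖v21 (u10 z.fst + u11 xx) + v22 z.snd‖ ^ 2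
        = ‖u10 z.fst + u11 xx‖ ^ 2 + ‖z.snd‖ ^ 2 := hnormv (p2 (u10 z.fst + u11 xx) z.snd)
    rw [hv11y, sub_add_cancel] at h2
    have h3 : ‖compUnitary u00 u01 u10 u11 v11 v12 v21 v22 X Y z‖ ^ 2
        = ‖(compUnitary u00 u01 u10 u11 v11 v12 v21 v22 X Y z).fst‖ ^ 2
          + ‖(compUnitary u00 u01 u10 u11 v11 v12 v21 v22 X Y z).snd‖ ^ 2 := aux_normsq _
    rw [hWf, hWs] at h3
    have h4 : ‖z‖ ^ 2 = ‖z.fst‖ ^ 2 + ‖z.snd‖ ^ 2 := aux_normsq z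
    apply aux_sq_eq (norm_nonneg _) (norm_nonneg _)
    rw [h3, h4]
    linarith
  -- the composed map is surjective
  have hWsurj : Function.Surjective (compUnitary u00 u01 u10 u11 v11 v12 v21 v22 X Y) := by
    intro t
    obtain ⟨rr, hrr⟩ : ∃ rr, rr = adjoint u01 t.fst + adjoint u11 (adjoint v21 t.snd) := ⟨_, rfl⟩
    have hsol : adjoint (opA u11 v11) (adjoint X rr) = rr := by
      apply aux_gi_solve _ _ (aux_gi_adjoint _ _ hX2)
      intro k hk
      rw [ContinuousLinearMap.adjoint_adjoint] at hk
      obtain ⟨h1, h2⟩ := hKA k hk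
      rw [hrr, inner_add_left, ContinuousLinearMap.adjoint_inner_left, h1, inner_zero_right,
        ContinuousLinearMap.adjoint_inner_left, ContinuousLinearMap.adjoint_inner_left, h2,
        inner_zero_right, add_zero]
    obtain ⟨xx, hxxdef⟩ : ∃ xx, xx = adjoint X rr := ⟨_, rfl⟩
    have hA'xx : adjoint (opA u11 v11) xx = rr := by rw [hxxdef]; exact hsol
    obtain ⟨y1, hy1⟩ : ∃ y1, y1 = adjoint v11 xx + adjoint v21 t.snd := ⟨_, rfl⟩
    obtain ⟨x0, hx0⟩ : ∃ x0, x0 = adjoint u00 t.fst + adjoint u10 y1 := ⟨_, rfl⟩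
    obtain ⟨y2, hy2⟩ : ∃ y2, y2 = adjoint v12 xx + adjoint v22 t.snd := ⟨_, rfl⟩
    have e : adjoint u11 (adjoint v11 xx) = xx - rr := by
      have h := hA'xx
      rw [hA'app] at h
      rw [← h]
      abel
    have hkey : xx = adjoint u01 t.fst + adjoint u11 y1 := by
      rw [hy1, map_add (adjoint u11), e, hrr]
      abel
    have hmem : p2 (p2 t.fst x0) (p2 y2 t.snd) ∈ compCorr (W0 := WithLp 2 (V0p × V0m)) (W1 := WithLp 2 (V1p × V1m))
          (W2 := WithLp 2 (V2p × V2m)) (corrGraph u) (corrGraph v) := by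
      rw [hmemC]
      refine ⟨p2 x0 xx, p2 y1 y2, ?_, ?_⟩
      · show p2 xx (u (p2 x0 xx)).snd = p2 (v (p2 y1 y2)).fst y1
        refine wext ?_ ?_
        · show xx = (v (p2 y1 y2)).fst
          rw [hvbf (p2 y1 y2)]
          show xx = v11 y1 + v12 y2
          rw [hy1, hy2]
          exact ((hVrow xx t.snd).1).symm
        · show (u (p2 x0 xx)).snd = y1
          rw [hubs (p2 x0 xx)]
          show u10 x0 + u11 xx = y1
          rw [hx0, hkey]
          exact (hUrow t.fst y1).2
      · show p2 (p2 (u (p2 x0 xx)).fst x0) (p2 y2 (v (p2 y1 y2)).snd)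
          = p2 (p2 t.fst x0) (p2 y2 t.snd)
        refine wext (wext ?_ rfl) (wext rfl ?_)
        · show (u (p2 x0 xx)).fst = t.fst
          rw [hubf (p2 x0 xx)]
          show u00 x0 + u01 xx = t.fst
          rw [hx0, hkey]
          exact (hUrow t.fst y1).1
        · show (v (p2 y1 y2)).snd = t.snd
          rw [hvbs (p2 y1 y2)]
          show v21 y1 + v22 y2 = t.snd
          rw [hy1, hy2]
          exact (hVrow xx t.snd).2
    rw [hEq] at hmem
    obtain ⟨zz, hzz⟩ := LinearMap.mem_range.mp hmem
    refine ⟨zz, ?_⟩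
    have hf : (compUnitary u00 u01 u10 u11 v11 v12 v21 v22 X Y zz).fst = t.fst :=
      congrArg (fun m => m.fst.fst) hzz
    have hs : (compUnitary u00 u01 u10 u11 v11 v12 v21 v22 X Y zz).snd = t.snd :=
      congrArg (fun m => m.snd.snd) hzz
    exact wext hf hs
  refine ⟨?_, ⟨hWiso, hWsurj⟩, hEq⟩
  rw [hEq]
  exact aux_isLagCorr_corrGraph _ ⟨hWiso, hWsurj⟩
end Statement15
end
end
end
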